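/- arXiv:1510.03939 — 2 statements merged into one kernel-verified Lean document; each statement's English description precedes it below -/
import Mathlib

section
/- Let α ∈ C_Γ(ι) and v ∈ V. If u_1 and u_2 are distinct vertices of Γ such that the exponent sum of u_1 in α(v) is odd and the exponent sum of u_2 in α(v) is odd, then u_1 and u_2 are adjacent in Γ (so u_1 and u_2 commute in A_Γ). -/
namespace RaagPal

/-- The commutator relators defining the right-angled Artin group on a graph. -/
def raagRels {V : Type*} (G : SimpleGraph V) : Set (FreeGroup V) :=
  {r | ∃ i j : V, G.Adj i j ∧
    r = FreeGroup.of i * FreeGroup.of j * (FreeGroup.of i)⁻¹ * (FreeGroup.of j)⁻¹}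

/-- The right-angled Artin group `A_Γ`. -/
abbrev RAAG {V : Type*} (G : SimpleGraph V) := PresentedGroup (raagRels G)

/-- The generator of `A_Γ` corresponding to a vertex. -/
def gen {V : Type*} (G : SimpleGraph V) (i : V) : RAAG G := PresentedGroup.of i

/-- The element of `A_Γ` given by a single letter `v^{±1}`. -/
def letter {V : Type*} (G : SimpleGraph V) (p : V × Bool) : RAAG G :=
  if p.2 then gen G p.1 else (gen G p.1)⁻¹

/-- The element of `A_Γ` represented by a word on `V^{±1}`. -/
def wordProd {V : Type*} (G : SimpleGraph V) (L : List (V × Bool)) : RAAG G :=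
  (L.map (letter G)).prod

/-- An element of `A_Γ` is a palindrome if it is represented by a word equal to its reverse. -/
def IsPalindrome {V : Type*} (G : SimpleGraph V) (w : RAAG G) : Prop :=
  ∃ L : List (V × Bool), L.reverse = L ∧ wordProd G L = w

/-- A palindromic automorphism of `A_Γ`. -/
def IsPalAut {V : Type*} (G : SimpleGraph V) (α : MulAut (RAAG G)) : Prop :=
  ∀ i : V, IsPalindrome G (α (gen G i))

/-- A pure palindromic automorphism: each `α(v)` is a palindrome with middle letter `v^{±1}`. -/
def IsPurePalAut {V : Type*} (G : SimpleGraph V) (α : MulAut (RAAG G)) : Prop :=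
  ∀ i : V, ∃ (L : List (V × Bool)) (b : Bool),
    α (gen G i) = wordProd G (L ++ (i, b) :: L.reverse)

/-- `Dom G u v` means `u ≤ v`, i.e. `lk(u) ⊆ st(v)` : `v` dominates `u`. -/
def Dom {V : Type*} (G : SimpleGraph V) (u v : V) : Prop :=
  ∀ k : V, G.Adj k u → k = v ∨ G.Adj k v

/-- A diagram automorphism of `A_Γ`, induced by a graph automorphism of `Γ`. -/
def IsDiagramAut {V : Type*} (G : SimpleGraph V) (α : MulAut (RAAG G)) : Prop :=
  ∃ φ : G ≃g G, ∀ i : V, α (gen G i) = gen G (φ i)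

/-- An inversion `ι_j` of `A_Γ`. -/
def IsInversion {V : Type*} (G : SimpleGraph V) (α : MulAut (RAAG G)) : Prop :=
  ∃ j : V, α (gen G j) = (gen G j)⁻¹ ∧ ∀ k ≠ j, α (gen G k) = gen G k

/-- The dominated elementary palindromic automorphism `P_ij : v_i ↦ v_j v_i v_j`. -/
def IsPij {V : Type*} (G : SimpleGraph V) (i j : V) (α : MulAut (RAAG G)) : Prop :=
  i ≠ j ∧ Dom G i j ∧ α (gen G i) = gen G j * gen G i * gen G j ∧
    ∀ k ≠ i, α (gen G k) = gen G k

/-- A (well-defined) dominated elementary palindromic automorphism. -/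
def IsElemPal {V : Type*} (G : SimpleGraph V) (α : MulAut (RAAG G)) : Prop :=
  ∃ i j : V, IsPij G i j α

/-- An adjacent dominated transvection `τ_ij : v_i ↦ v_i v_j` with `v_i, v_j` adjacent. -/
def IsAdjTransvection {V : Type*} (G : SimpleGraph V) (α : MulAut (RAAG G)) : Prop :=
  ∃ i j : V, i ≠ j ∧ Dom G i j ∧ G.Adj i j ∧ α (gen G i) = gen G i * gen G j ∧
    ∀ k ≠ i, α (gen G k) = gen G k

/-- The exponent-sum homomorphism `A_Γ → ℤ` of the vertex `u`. -/
def expSum {V : Type*} [DecidableEq V] (G : SimpleGraph V) (u : V) :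
    RAAG G →* Multiplicative ℤ :=
  PresentedGroup.toGroup
    (f := fun i => Multiplicative.ofAdd (if i = u then (1 : ℤ) else 0))
    (by
      rintro r ⟨i, j, -, rfl⟩
      simp only [map_mul, map_inv, FreeGroup.lift_apply_of]
      rw [mul_comm (Multiplicative.ofAdd (if i = u then (1:ℤ) else 0))]
      group)

/-- The abelianisation vector of exponent sums of `w ∈ A_Γ`. -/
def abVec {n : ℕ} (G : SimpleGraph (Fin n)) (w : RAAG G) : Fin n → ℤ :=
  fun i => Multiplicative.toAdd (expSum G i w)

/-- The mod 2 abelianisation vector of `w ∈ A_Γ`. -/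
def mod2Vec {n : ℕ} (G : SimpleGraph (Fin n)) (w : RAAG G) : Fin n → ZMod 2 :=
  fun i => (abVec G w i : ZMod 2)

end RaagPal

namespace RaagAux


open FreeGroup

variable {β : Type*}

/-- The automorphism of a free group inverting every generator (as a hom). -/
def invGenHom (β : Type*) : FreeGroup β →* FreeGroup β :=
  FreeGroup.lift fun b => (FreeGroup.of b)⁻¹

lemma invGenHom_of (b : β) : invGenHom β (FreeGroup.of b) = (FreeGroup.of b)⁻¹ :=
  FreeGroup.lift_apply_of

lemma invGenHom_mk_inv (L : List (β × Bool)) :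
    (invGenHom β (FreeGroup.mk L))⁻¹ = FreeGroup.mk L.reverse := by
  induction L with
  | nil => simp [← FreeGroup.one_eq_mk]
  | cons a T ih =>
    have h1 : FreeGroup.mk (a :: T) = FreeGroup.mk [a] * FreeGroup.mk T := by
      rw [FreeGroup.mul_mk]; rfl
    have hsingle : (invGenHom β (FreeGroup.mk [a]))⁻¹ = FreeGroup.mk [a] := by
      obtain ⟨x, b⟩ := a
      cases b
      · have : FreeGroup.mk [(x, false)] = (FreeGroup.of x)⁻¹ := by
          rw [FreeGroup.of, FreeGroup.inv_mk]; rfl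
        rw [this, MonoidHom.map_inv, invGenHom_of, inv_inv]
      · show (invGenHom β (FreeGroup.of x))⁻¹ = FreeGroup.of x
        rw [invGenHom_of, inv_inv]
    rw [h1, MonoidHom.map_mul, mul_inv_rev, ih, hsingle, FreeGroup.mul_mk]
    simp

lemma toWord_palindrome [DecidableEq β] {w : FreeGroup β} (h : (invGenHom β w)⁻¹ = w) :
    w.toWord.reverse = w.toWord := by
  set L := w.toWord with hL
  have hw : FreeGroup.mk L = w := by rw [hL]; exact FreeGroup.mk_toWord
  have h1 : FreeGroup.mk L.reverse = FreeGroup.mk L := by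
    rw [← invGenHom_mk_inv, hw, h]
  have h2 : FreeGroup.reduce L.reverse = FreeGroup.reduce L := FreeGroup.reduce.sound h1
  have h3 : FreeGroup.reduce L = L := by rw [hL]; exact FreeGroup.reduce_toWord w
  have h4 : FreeGroup.Red L.reverse L := by
    have := FreeGroup.reduce.red (L := L.reverse)
    rwa [h2, h3] at this
  have h5 : List.Sublist L L.reverse := h4.sublist
  exact (h5.eq_of_length (by simp)).symm

/-- Signed letter count of a generator in a word. -/
def wsum [DecidableEq β] (x : β) (L : List (β × Bool)) : ℤ :=
  (L.map fun p => if p.1 = x then (if p.2 then (1 : ℤ) else -1) else 0).sum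

lemma wsum_nil [DecidableEq β] (x : β) : wsum x ([] : List (β × Bool)) = 0 := rfl

lemma wsum_cons [DecidableEq β] (x : β) (a : β × Bool) (L : List (β × Bool)) :
    wsum x (a :: L) = (if a.1 = x then (if a.2 then (1 : ℤ) else -1) else 0) + wsum x L := by
  simp [wsum]

lemma wsum_append [DecidableEq β] (x : β) (L M : List (β × Bool)) :
    wsum x (L ++ M) = wsum x L + wsum x M := by
  simp [wsum]

lemma toAdd_lift_mk [DecidableEq β] (x : β) (L : List (β × Bool)) :
    Multiplicative.toAdd
      (FreeGroup.lift (fun y => Multiplicative.ofAdd (if y = x then (1 : ℤ) else 0))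
        (FreeGroup.mk L)) = wsum x L := by
  rw [FreeGroup.lift_mk]
  induction L with
  | nil => rfl
  | cons a T ih =>
    obtain ⟨y, b⟩ := a
    cases b <;> simp_all [wsum_cons, toAdd_mul] <;> split_ifs <;> simp

lemma wsum_palindrome_aux [DecidableEq β] {x y : β} (hxy : x ≠ y) :
    ∀ (N : ℕ) (L : List (β × Bool)), L.length ≤ N → L.reverse = L →
      Even (wsum x L) ∨ Even (wsum y L) := by
  intro N
  induction N with
  | zero =>
    intro L hLen _
    have : L = [] := List.length_eq_zero_iff.mp (Nat.le_zero.mp hLen)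
    subst this
    left; simp [wsum_nil]
  | succ N ih =>
    intro L hLen hpal
    match L with
    | [] => left; simp [wsum_nil]
    | a :: T =>
      rcases T.eq_nil_or_concat with rfl | ⟨B, c, rfl⟩
      · by_cases hx : a.1 = x
        · right
          have : wsum y [a] = 0 := by
            simp [wsum, hx, hxy]
          rw [this]; exact Even.zero
        · left
          have : wsum x [a] = 0 := by simp [wsum, hx]
          rw [this]; exact Even.zero
      · simp only [List.concat_eq_append] at hpal hLen ⊢
        have hrev : (a :: (B ++ [c])).reverse = c :: (B.reverse ++ [a]) := by simp
        rw [hrev] at hpal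
        obtain ⟨hc, hT⟩ := List.cons_eq_cons.mp hpal
        rw [hc] at hT hLen ⊢
        have hB : B.reverse = B := List.append_cancel_right hT
        have hwsum : ∀ z : β, wsum z (a :: (B ++ [a])) =
            wsum z B + 2 * (if a.1 = z then (if a.2 then (1 : ℤ) else -1) else 0) := by
          intro z
          rw [wsum_cons, wsum_append, wsum_cons, wsum_nil]
          ring
        have hBlen : B.length ≤ N := by
          simp only [List.length_cons, List.length_append, List.length_singleton] at hLen
          omega
        rcases ih B hBlen hB with h | h
        · left; rw [hwsum x]; exact h.add (even_two_mul _)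
        · right; rw [hwsum y]; exact h.add (even_two_mul _)


/-- Exponent-sum homomorphism on a free group. -/
def efHom {β : Type*} [DecidableEq β] (x : β) : FreeGroup β →* Multiplicative ℤ :=
  FreeGroup.lift fun y => Multiplicative.ofAdd (if y = x then (1 : ℤ) else 0)

lemma toAdd_efHom_mk [DecidableEq β] (x : β) (L : List (β × Bool)) :
    Multiplicative.toAdd (efHom x (FreeGroup.mk L)) = wsum x L :=
  toAdd_lift_mk x L

/-- The retraction data onto two generators. -/
def retrMap {n : ℕ} (u₁ u₂ : Fin n) (i : Fin n) : FreeGroup Bool :=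
  if i = u₁ then FreeGroup.of false else if i = u₂ then FreeGroup.of true else 1

lemma expSum_of {V : Type*} [DecidableEq V] (G : SimpleGraph V) (u x : V) :
    RaagPal.expSum G u (PresentedGroup.of x) =
      Multiplicative.ofAdd (if x = u then (1 : ℤ) else 0) :=
  PresentedGroup.toGroup.of _

lemma retr_rels {n : ℕ} (G : SimpleGraph (Fin n)) {u₁ u₂ : Fin n}
    (hadj : ¬ G.Adj u₁ u₂) :
    ∀ r ∈ RaagPal.raagRels G, FreeGroup.lift (retrMap u₁ u₂) r = 1 := by
  rintro r ⟨i, j, hij, rfl⟩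
  have hc : Commute (retrMap u₁ u₂ i) (retrMap u₁ u₂ j) := by
    unfold retrMap
    split_ifs <;>
      first
        | exact Commute.refl _
        | exact Commute.one_left _
        | exact Commute.one_right _
        | (exfalso; subst_vars; first | exact hadj hij | exact hadj hij.symm)
  simp only [_root_.map_mul, _root_.map_inv, FreeGroup.lift_apply_of]
  rw [hc.eq]
  group

end RaagAux



open RaagPal in
/-- if `α ∈ C_Γ(ι)` and `u_1 ≠ u_2` both have odd exponent sum in `α(v)`,
then `u_1` and `u_2` are adjacent in `Γ` (so the generators `u_1, u_2` commute in `A_Γ`). -/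
theorem odd_exponent_sums_adjacent (n : ℕ) (G : SimpleGraph (Fin n))
    (ι : MulAut (RAAG G)) (hι : ∀ i, ι (gen G i) = (gen G i)⁻¹)
    (α : MulAut (RAAG G)) (hα : α ∈ Subgroup.centralizer ({ι} : Set (MulAut (RAAG G))))
    (v u₁ u₂ : Fin n) (hne : u₁ ≠ u₂)
    (h₁ : Odd (abVec G (α (gen G v)) u₁)) (h₂ : Odd (abVec G (α (gen G v)) u₂)) :
    G.Adj u₁ u₂ ∧ Commute (gen G u₁) (gen G u₂) := by
  classical
  have hcomm : ∀ x : RAAG G, ι (α x) = α (ι x) := by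
    have h := Subgroup.mem_centralizer_iff.mp hα ι rfl
    intro x
    exact congrArg (fun σ : MulAut (RAAG G) => σ x) h
  have key : ι (α (gen G v)) = (α (gen G v))⁻¹ := by
    rw [hcomm, hι v, map_inv]
  have hadj : G.Adj u₁ u₂ := by
    by_contra hadj
    set π := PresentedGroup.toGroup (RaagAux.retr_rels G hadj) with hπdef
    have hπof : ∀ i : Fin n, π (gen G i) = RaagAux.retrMap u₁ u₂ i := fun i =>
      PresentedGroup.toGroup.of _
    have hπι : π.comp ι.toMonoidHom = (RaagAux.invGenHom Bool).comp π := by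
      apply PresentedGroup.ext
      intro x
      show π (ι (gen G x)) = RaagAux.invGenHom Bool (π (gen G x))
      rw [hι x, map_inv, hπof]
      unfold RaagAux.retrMap
      split_ifs <;> simp [RaagAux.invGenHom_of]
    set w := α (gen G v) with hw
    have hπιw : π (ι w) = RaagAux.invGenHom Bool (π w) := by
      have := DFunLike.congr_fun hπι w
      simpa using this
    have hkey2 : (RaagAux.invGenHom Bool (π w))⁻¹ = π w := by
      rw [← hπιw, key, map_inv, inv_inv]
    have hpal := RaagAux.toWord_palindrome hkey2
    have hexp : ∀ (u : Fin n) (b : Bool),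
        ((u = u₁ ∧ b = false) ∨ (u = u₂ ∧ b = true)) →
        expSum G u = (RaagAux.efHom b).comp π := by
      rintro u b (⟨rfl, rfl⟩ | ⟨rfl, rfl⟩) <;>
      · apply PresentedGroup.ext
        intro x
        rw [MonoidHom.comp_apply, RaagAux.expSum_of]
        have h0 : π (PresentedGroup.of x) = RaagAux.retrMap _ _ x := hπof x
        rw [h0]
        unfold RaagAux.retrMap
        split_ifs with hx1 hx2 <;>
          simp_all [RaagAux.efHom, FreeGroup.lift_apply_of, hne, hne.symm]
    have h₁' : Odd (Multiplicative.toAdd (RaagAux.efHom false (π w))) := by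
      have e := DFunLike.congr_fun (hexp u₁ false (Or.inl ⟨rfl, rfl⟩)) w
      have : abVec G w u₁ = Multiplicative.toAdd (RaagAux.efHom false (π w)) := by
        unfold abVec
        rw [e]; rfl
      rw [← this]; exact h₁
    have h₂' : Odd (Multiplicative.toAdd (RaagAux.efHom true (π w))) := by
      have e := DFunLike.congr_fun (hexp u₂ true (Or.inr ⟨rfl, rfl⟩)) w
      have : abVec G w u₂ = Multiplicative.toAdd (RaagAux.efHom true (π w)) := by
        unfold abVec
        rw [e]; rfl
      rw [← this]; exact h₂
    set L := (π w).toWord with hL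
    have hmkL : FreeGroup.mk L = π w := by rw [hL]; exact FreeGroup.mk_toWord
    have e1 : Multiplicative.toAdd (RaagAux.efHom false (π w)) = RaagAux.wsum false L := by
      rw [← hmkL]; exact RaagAux.toAdd_efHom_mk false L
    have e2 : Multiplicative.toAdd (RaagAux.efHom true (π w)) = RaagAux.wsum true L := by
      rw [← hmkL]; exact RaagAux.toAdd_efHom_mk true L
    rcases RaagAux.wsum_palindrome_aux (x := false) (y := true) (by simp)
        L.length L le_rfl hpal with h | h
    · exact (Int.not_odd_iff_even.mpr h) (e1 ▸ h₁')
    · exact (Int.not_odd_iff_even.mpr h) (e2 ▸ h₂')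
  refine ⟨hadj, ?_⟩
  have hrel : (FreeGroup.of u₁ * FreeGroup.of u₂ * (FreeGroup.of u₁)⁻¹ * (FreeGroup.of u₂)⁻¹ :
      FreeGroup (Fin n)) ∈ Subgroup.normalClosure (raagRels G) :=
    Subgroup.subset_normalClosure ⟨u₁, u₂, hadj, rfl⟩
  have h1 : (PresentedGroup.mk (raagRels G))
      (FreeGroup.of u₁ * FreeGroup.of u₂ * (FreeGroup.of u₁)⁻¹ * (FreeGroup.of u₂)⁻¹) = 1 :=
    (QuotientGroup.eq_one_iff _).mpr hrel
  rw [map_mul, map_mul, map_inv, map_inv] at h1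
  have h2 : gen G u₁ * gen G u₂ * (gen G u₁)⁻¹ * (gen G u₂)⁻¹ = 1 := h1
  exact commutatorElement_eq_one_iff_commute.mp (by rw [commutatorElement_def]; exact h2)
end

section
/- The set ΠA_Γ of palindromic automorphisms of A_Γ forms a subgroup of Aut(A_Γ), and this group splits as a semidirect product ΠA_Γ ≅ ΠPA_Γ ⋊ D_Γ, where D_Γ is the subgroup of diagram automorphisms. -/
namespace RaagPal

variable {n : ℕ} {G : SimpleGraph (Fin n)}

/-! ### Basic lemmas about generators, letters and word products -/

abbrev Letter (n : ℕ) := Fin n × Bool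

/-- Inverse of a letter. -/
def linv (p : Letter n) : Letter n := (p.1, !p.2)

@[simp] lemma linv_linv (p : Letter n) : linv (linv p) = p := by simp [linv]

@[simp] lemma linv_fst (p : Letter n) : (linv p).1 = p.1 := rfl

lemma relation_holds {i j : Fin n} (h : G.Adj i j) :
    gen G i * gen G j * (gen G i)⁻¹ * (gen G j)⁻¹ = 1 := by
  have hmem : (FreeGroup.of i * FreeGroup.of j * (FreeGroup.of i)⁻¹ * (FreeGroup.of j)⁻¹ :
      FreeGroup (Fin n)) ∈ Subgroup.normalClosure (raagRels G) :=
    Subgroup.subset_normalClosure ⟨i, j, h, rfl⟩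
  have h1 : (PresentedGroup.mk (raagRels G))
      (FreeGroup.of i * FreeGroup.of j * (FreeGroup.of i)⁻¹ * (FreeGroup.of j)⁻¹) = 1 := by
    exact (QuotientGroup.eq_one_iff _).2 hmem
  simpa [map_mul, map_inv, gen, PresentedGroup.of] using h1

lemma gen_comm {i j : Fin n} (h : G.Adj i j) : Commute (gen G i) (gen G j) := by
  have := relation_holds (G := G) h
  have h2 : gen G i * gen G j = gen G j * gen G i := by
    calc gen G i * gen G j
        = (gen G i * gen G j * (gen G i)⁻¹ * (gen G j)⁻¹) * (gen G j * gen G i) := by group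
      _ = gen G j * gen G i := by rw [relation_holds h]; group
  exact h2

lemma letter_comm {p q : Letter n} (h : G.Adj p.1 q.1) :
    Commute (letter G p) (letter G q) := by
  have h0 : Commute (gen G p.1) (gen G q.1) := gen_comm h
  rcases p with ⟨a, ba⟩; rcases q with ⟨c, bc⟩
  cases ba <;> cases bc <;>
    simp [letter] <;>
    first
      | exact h0
      | exact h0.inv_left
      | exact h0.inv_right
      | exact h0.inv_left.inv_right

@[simp] lemma wordProd_nil : wordProd G [] = 1 := rfl

@[simp] lemma wordProd_cons (p : Letter n) (L : List (Letter n)) :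
    wordProd G (p :: L) = letter G p * wordProd G L := by
  simp [wordProd]

lemma wordProd_append (A B : List (Letter n)) :
    wordProd G (A ++ B) = wordProd G A * wordProd G B := by
  simp [wordProd]

@[simp] lemma wordProd_singleton (p : Letter n) : wordProd G [p] = letter G p := by
  simp [wordProd]

@[simp] lemma letter_linv (p : Letter n) : letter G (linv p) = (letter G p)⁻¹ := by
  rcases p with ⟨v, b⟩; cases b <;> simp [letter, linv]

@[simp] lemma letter_mul_linv (p : Letter n) : letter G p * letter G (linv p) = 1 := by
  simp

/-! ### Homomorphism extensionality -/

lemma hom_ext {H : Type*} [Group H] {f g : RAAG G →* H}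
    (h : ∀ i, f (gen G i) = g (gen G i)) : f = g :=
  PresentedGroup.ext h

lemma mulAut_ext {α : MulAut (RAAG G)} (h : ∀ i, α (gen G i) = gen G i) : α = 1 := by
  have : α.toMonoidHom = (MulEquiv.refl (RAAG G)).toMonoidHom := hom_ext (by simpa using h)
  ext x
  exact DFunLike.congr_fun this x

/-! ### The reversal anti-automorphism -/

private lemma rop_rels :
    ∀ r ∈ raagRels G, FreeGroup.lift (fun i => MulOpposite.op (gen G i)) r = 1 := by
  rintro r ⟨i, j, hij, rfl⟩
  simp only [map_mul, map_inv, FreeGroup.lift_apply_of]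
  rw [← MulOpposite.op_inv, ← MulOpposite.op_inv, ← MulOpposite.op_mul, ← MulOpposite.op_mul,
    ← MulOpposite.op_mul, MulOpposite.op_eq_one_iff]
  have h := (gen_comm (G := G) hij).symm
  calc (gen G j)⁻¹ * ((gen G i)⁻¹ * (gen G j * gen G i))
      = (gen G j)⁻¹ * ((gen G i)⁻¹ * (gen G i * gen G j)) := by rw [h.eq]
    _ = 1 := by group

/-- Reversal, as a homomorphism to the opposite group. -/
def Rop : RAAG G →* (RAAG G)ᵐᵒᵖ :=
  PresentedGroup.toGroup (f := fun i => MulOpposite.op (gen G i)) rop_rels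

/-- The reversal anti-automorphism of the RAAG. -/
def RR (G : SimpleGraph (Fin n)) (w : RAAG G) : RAAG G := (Rop w).unop

lemma RR_mul (x y : RAAG G) : RR G (x * y) = RR G y * RR G x := by
  simp [RR, map_mul]

@[simp] lemma RR_one : RR G 1 = 1 := by simp [RR]

@[simp] lemma RR_gen (i : Fin n) : RR G (gen G i) = gen G i := by
  simp only [RR, Rop, gen, PresentedGroup.toGroup.of]
  rfl

@[simp] lemma RR_inv (x : RAAG G) : RR G x⁻¹ = (RR G x)⁻¹ := by
  simp [RR, map_inv]

@[simp] lemma RR_letter (p : Letter n) : RR G (letter G p) = letter G p := by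
  rcases p with ⟨v, b⟩; cases b <;> simp [letter]

private def RRsq : RAAG G →* RAAG G where
  toFun w := RR G (RR G w)
  map_one' := by simp
  map_mul' x y := by rw [RR_mul, RR_mul]

@[simp] lemma RR_RR (w : RAAG G) : RR G (RR G w) = w := by
  have : (RRsq : RAAG G →* RAAG G) = MonoidHom.id (RAAG G) := by
    apply hom_ext
    intro i
    simp [RRsq]
  exact DFunLike.congr_fun this w

lemma RR_zpow (x : RAAG G) (h : RR G x = x) (k : ℤ) : RR G (x ^ k) = x ^ k := by
  induction k using Int.induction_on with
  | zero => simp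
  | succ m ih =>
      rw [zpow_add, zpow_one, RR_mul, ih, h]
      rw [← zpow_one_add, add_comm, zpow_add, zpow_one]
  | pred m ih =>
      rw [sub_eq_add_neg, zpow_add, RR_mul, ih, zpow_neg, zpow_one, RR_inv, h]
      rw [← zpow_neg_one, ← zpow_add, ← zpow_add, add_comm]

lemma wordProd_reverse (L : List (Letter n)) :
    wordProd G L.reverse = RR G (wordProd G L) := by
  induction L with
  | nil => simp
  | cons p L ih =>
      rw [List.reverse_cons, wordProd_append, ih, wordProd_cons (G := G) p L, RR_mul,
        wordProd_singleton, RR_letter]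

lemma exists_word (w : RAAG G) : ∃ L : List (Letter n), wordProd G L = w := by
  obtain ⟨x, rfl⟩ := PresentedGroup.mk_surjective (raagRels G) w
  induction x using FreeGroup.induction_on with
  | C1 => exact ⟨[], by simp⟩
  | of v => exact ⟨[(v, true)], by simp only [wordProd_singleton, letter]; rfl⟩
  | inv_of v _ =>
      refine ⟨[(v, false)], ?_⟩
      simp only [wordProd_singleton, letter, Bool.false_eq_true, if_false, map_inv]
      norm_num
      rfl
  | mul x y hx hy =>
      obtain ⟨Lx, hLx⟩ := hx
      obtain ⟨Ly, hLy⟩ := hy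
      exact ⟨Lx ++ Ly, by simp [wordProd_append, hLx, hLy, map_mul]⟩

end RaagPal
namespace RaagPal

variable {n : ℕ} {G : SimpleGraph (Fin n)}

/-! ### Swap equivalence of words (trace equivalence) -/

/-- One swap of two adjacent commuting letters. -/
def SwapStep (G : SimpleGraph (Fin n)) (L L' : List (Letter n)) : Prop :=
  ∃ (A B : List (Letter n)) (x y : Letter n),
    G.Adj x.1 y.1 ∧ L = A ++ x :: y :: B ∧ L' = A ++ y :: x :: B

/-- Swap equivalence of words. -/
def SEq (G : SimpleGraph (Fin n)) : List (Letter n) → List (Letter n) → Prop :=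
  Relation.ReflTransGen (SwapStep G)

lemma SwapStep.symm {L L' : List (Letter n)} (h : SwapStep G L L') : SwapStep G L' L := by
  obtain ⟨A, B, x, y, hadj, h1, h2⟩ := h
  exact ⟨A, B, y, x, hadj.symm, h2, h1⟩

@[refl] lemma SEq.refl (L : List (Letter n)) : SEq G L L := Relation.ReflTransGen.refl

lemma SEq.trans {L M N : List (Letter n)} (h : SEq G L M) (h' : SEq G M N) : SEq G L N :=
  Relation.ReflTransGen.trans h h'

lemma SEq.symm {L M : List (Letter n)} (h : SEq G L M) : SEq G M L :=
  by haveI : Std.Symm (SwapStep G) := ⟨fun _ _ hs => hs.symm⟩; exact Relation.ReflTransGen.symmetric.symm _ _ h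

lemma SEq.single {L M : List (Letter n)} (h : SwapStep G L M) : SEq G L M :=
  Relation.ReflTransGen.single h

lemma SEq.cons (p : Letter n) {L M : List (Letter n)} (h : SEq G L M) :
    SEq G (p :: L) (p :: M) := by
  refine Relation.ReflTransGen.lift (fun K => p :: K) ?_ _ _ h
  rintro a b ⟨A, B, x, y, hadj, rfl, rfl⟩
  exact ⟨p :: A, B, x, y, hadj, rfl, rfl⟩

lemma SEq.append_left (C : List (Letter n)) {L M : List (Letter n)} (h : SEq G L M) :
    SEq G (C ++ L) (C ++ M) := by
  refine Relation.ReflTransGen.lift (fun K => C ++ K) ?_ _ _ h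
  rintro a b ⟨A, B, x, y, hadj, rfl, rfl⟩
  exact ⟨C ++ A, B, x, y, hadj, by simp, by simp⟩

lemma SEq.append_right (C : List (Letter n)) {L M : List (Letter n)} (h : SEq G L M) :
    SEq G (L ++ C) (M ++ C) := by
  refine Relation.ReflTransGen.lift (fun K => K ++ C) ?_ _ _ h
  rintro a b ⟨A, B, x, y, hadj, rfl, rfl⟩
  exact ⟨A, B ++ C, x, y, hadj, by simp, by simp⟩

lemma SEq.append {L M L' M' : List (Letter n)} (h : SEq G L M) (h' : SEq G L' M') :
    SEq G (L ++ L') (M ++ M') :=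
  (SEq.append_right L' h).trans (SEq.append_left M h')

lemma SEq.reverse {L M : List (Letter n)} (h : SEq G L M) : SEq G L.reverse M.reverse := by
  refine Relation.ReflTransGen.lift List.reverse ?_ _ _ h
  rintro a b ⟨A, B, x, y, hadj, rfl, rfl⟩
  refine ⟨B.reverse, A.reverse, y, x, hadj.symm, by simp, by simp⟩

lemma SEq.perm {L M : List (Letter n)} (h : SEq G L M) : L.Perm M := by
  induction h with
  | refl => exact List.Perm.refl _
  | tail _ hs ih =>
      obtain ⟨A, B, x, y, _, rfl, rfl⟩ := hs
      exact ih.trans ((List.Perm.append_left A (List.Perm.swap y x B)))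

lemma SEq.length_eq {L M : List (Letter n)} (h : SEq G L M) : L.length = M.length :=
  h.perm.length_eq

lemma SEq.wordProd_eq {L M : List (Letter n)} (h : SEq G L M) :
    wordProd G L = wordProd G M := by
  induction h with
  | refl => rfl
  | tail _ hs ih =>
      obtain ⟨A, B, x, y, hadj, rfl, rfl⟩ := hs
      rw [ih]
      simp only [wordProd_append, wordProd_cons]
      rw [← mul_assoc (letter G x) (letter G y), (letter_comm hadj).eq, mul_assoc]

/-- Bubble a letter to the front through letters it commutes with. -/
lemma seq_bubble {x : Letter n} {A B : List (Letter n)}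
    (h : ∀ r ∈ A, G.Adj x.1 r.1) : SEq G (A ++ x :: B) (x :: (A ++ B)) := by
  induction A with
  | nil => simp only [List.nil_append]; exact SEq.refl _
  | cons a A ih =>
      have h1 : SEq G (a :: (A ++ x :: B)) (a :: x :: (A ++ B)) :=
        SEq.cons a (ih (fun r hr => h r (List.mem_cons_of_mem a hr)))
      refine h1.trans (SEq.single ?_)
      exact ⟨[], A ++ B, a, x, (h a (List.mem_cons_self (a := a) (l := A))).symm, rfl, rfl⟩

/-- Bubble a letter to the back through letters it commutes with. -/
lemma seq_bubble_back {x : Letter n} {A B : List (Letter n)}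
    (h : ∀ r ∈ B, G.Adj x.1 r.1) : SEq G (A ++ x :: B) (A ++ (B ++ [x])) := by
  refine SEq.append_left A ?_
  induction B with
  | nil => simp only [List.nil_append]; exact SEq.refl _
  | cons b B ih =>
      have h1 : SwapStep G (x :: b :: B) (b :: x :: B) :=
        ⟨[], B, x, b, h b (List.mem_cons_self (a := b) (l := B)), rfl, rfl⟩
      refine (SEq.single h1).trans ?_
      simpa using SEq.cons b (ih (fun r hr => h r (List.mem_cons_of_mem b hr)))

/-! ### Projections onto pairs of vertices -/

/-- Projection of a word onto the letters with vertex in `{a, b}`. -/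
def proj (a b : Fin n) (L : List (Letter n)) : List (Letter n) :=
  L.filter (fun p => p.1 = a ∨ p.1 = b)

@[simp] lemma proj_nil (a b : Fin n) : proj a b [] = [] := rfl

lemma proj_append (a b : Fin n) (L M : List (Letter n)) :
    proj a b (L ++ M) = proj a b L ++ proj a b M := by
  simp [proj]

lemma proj_cons_keep {a b : Fin n} {p : Letter n} (h : p.1 = a ∨ p.1 = b)
    (L : List (Letter n)) : proj a b (p :: L) = p :: proj a b L := by
  simp [proj, List.filter_cons, h]

lemma proj_cons_drop {a b : Fin n} {p : Letter n} (h : ¬ (p.1 = a ∨ p.1 = b))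
    (L : List (Letter n)) : proj a b (p :: L) = proj a b L := by
  simp [proj, List.filter_cons, h]

lemma mem_of_mem_proj {a b : Fin n} {p : Letter n} {L : List (Letter n)}
    (h : p ∈ proj a b L) : p ∈ L := List.mem_of_mem_filter h

lemma vert_of_mem_proj {a b : Fin n} {p : Letter n} {L : List (Letter n)}
    (h : p ∈ proj a b L) : p.1 = a ∨ p.1 = b := by
  have := List.of_mem_filter h
  simpa using this

lemma mem_proj_of_mem {a b : Fin n} {p : Letter n} {L : List (Letter n)}
    (hp : p ∈ L) (h : p.1 = a ∨ p.1 = b) : p ∈ proj a b L :=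
  List.mem_filter.2 ⟨hp, by simpa using h⟩

/-- Projections onto non-adjacent pairs are invariant under swap equivalence. -/
lemma SEq.proj_eq {L M : List (Letter n)} (h : SEq G L M) {a b : Fin n}
    (hab : ¬ G.Adj a b) : proj a b L = proj a b M := by
  induction h with
  | refl => rfl
  | tail _ hs ih =>
      obtain ⟨A, B, x, y, hadj, rfl, rfl⟩ := hs
      rw [ih]
      simp only [proj_append]
      congr 1
      by_cases hx : x.1 = a ∨ x.1 = b <;> by_cases hy : y.1 = a ∨ y.1 = b
      · exfalso
        have hxy : x.1 ≠ y.1 := G.ne_of_adj hadj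
        rcases hx with hx | hx <;> rcases hy with hy | hy
        · exact hxy (hx.trans hy.symm)
        · exact hab (hx ▸ hy ▸ hadj)
        · exact hab (hy ▸ hx ▸ hadj.symm)
        · exact hxy (hx.trans hy.symm)
      · rw [proj_cons_keep hx (y :: B), proj_cons_drop hy B,
            proj_cons_drop hy (x :: B), proj_cons_keep hx B]
      · rw [proj_cons_drop hx (y :: B), proj_cons_keep hy B,
            proj_cons_keep hy (x :: B), proj_cons_drop hx B]
      · rw [proj_cons_drop hx (y :: B), proj_cons_drop hy B,
            proj_cons_drop hy (x :: B), proj_cons_drop hx B]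

/-- Find the first element of a list satisfying a property. -/
lemma exists_first {α : Type*} (P : α → Prop) (L : List α) (h : ∃ p ∈ L, P p) :
    ∃ A z B, L = A ++ z :: B ∧ P z ∧ ∀ r ∈ A, ¬ P r := by
  induction L with
  | nil => simp at h
  | cons q L ih =>
      by_cases hq : P q
      · exact ⟨[], q, L, rfl, hq, by simp⟩
      · obtain ⟨p, hp, hPp⟩ := h
        rcases List.mem_cons.1 hp with rfl | hp'
        · exact absurd hPp hq
        · obtain ⟨A, z, B, rfl, hz, hA⟩ := ih ⟨p, hp', hPp⟩
          refine ⟨q :: A, z, B, rfl, hz, ?_⟩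
          rintro r hr
          rcases List.mem_cons.1 hr with rfl | hr'
          · exact hq
          · exact hA r hr'

end RaagPal
namespace RaagPal

variable {n : ℕ} {G : SimpleGraph (Fin n)}

/-! ### Reconstruction of swap equivalence from projections -/

/-- If all projections of `x :: u` and `v` onto non-adjacent pairs agree, then the first
occurrence in `v` of a letter with the same vertex as `x` is `x` itself, and everything
before it commutes with `x`. -/
lemma firstOcc {x : Letter n} {u v : List (Letter n)}
    (hp : ∀ a b : Fin n, ¬ G.Adj a b → proj a b (x :: u) = proj a b v) :
    ∃ A B, v = A ++ x :: B ∧ (∀ r ∈ A, G.Adj x.1 r.1) ∧ (∀ r ∈ A, r.1 ≠ x.1) := by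
  have hxx : ¬ G.Adj x.1 x.1 := G.irrefl
  have h1 : proj x.1 x.1 (x :: u) = proj x.1 x.1 v := hp x.1 x.1 hxx
  rw [proj_cons_keep (Or.inl rfl)] at h1
  have hne : ∃ p ∈ v, p.1 = x.1 := by
    have : x ∈ proj x.1 x.1 v := by rw [← h1]; exact List.mem_cons_self
    exact ⟨x, mem_of_mem_proj this, rfl⟩
  obtain ⟨A, z, B, rfl, hz, hA⟩ := exists_first (fun p => p.1 = x.1) v hne
  have hprojA : proj x.1 x.1 A = [] := by
    rw [List.eq_nil_iff_forall_not_mem]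
    intro p hmem
    exact hA p (mem_of_mem_proj hmem) (by rcases vert_of_mem_proj hmem with h | h <;> exact h)
  have h2 : proj x.1 x.1 (A ++ z :: B) = z :: proj x.1 x.1 B := by
    rw [proj_append, hprojA, List.nil_append, proj_cons_keep (Or.inl hz)]
  have hzx : z = x := by
    rw [h2] at h1
    exact (List.cons.injEq _ _ _ _ ▸ h1).1.symm
  subst hzx
  refine ⟨A, B, rfl, ?_, hA⟩
  intro r hr
  by_contra hadj
  have hrx : r.1 ≠ z.1 := hA r hr
  have h3 : proj z.1 r.1 (z :: u) = proj z.1 r.1 (A ++ z :: B) := hp z.1 r.1 hadj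
  rw [proj_cons_keep (Or.inl rfl), proj_append] at h3
  have hrmem : r ∈ proj z.1 r.1 A := mem_proj_of_mem hr (Or.inr rfl)
  rcases hAp : proj z.1 r.1 A with _ | ⟨h₀, t⟩
  · rw [hAp] at hrmem; simp at hrmem
  · have hh0A : h₀ ∈ A := mem_of_mem_proj (by rw [hAp]; exact List.mem_cons_self (a := _) (l := _))
    have hh0x : h₀.1 ≠ z.1 := hA h₀ hh0A
    rw [hAp] at h3
    have hxz : z = h₀ := (List.cons.injEq _ _ _ _ ▸ h3).1
    rw [← hxz] at hh0x
    exact hh0x rfl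

/-- Swap equivalence is characterized by projections onto non-adjacent pairs. -/
lemma seq_of_proj : ∀ (u v : List (Letter n)),
    (∀ a b : Fin n, ¬ G.Adj a b → proj a b u = proj a b v) → SEq G u v := by
  intro u
  induction u with
  | nil =>
      intro v hp
      rcases v with _ | ⟨q, v'⟩
      · exact SEq.refl _
      · exfalso
        have h1 : proj q.1 q.1 [] = proj q.1 q.1 (q :: v') := hp q.1 q.1 G.irrefl
        rw [proj_cons_keep (Or.inl rfl)] at h1
        simp at h1
  | cons x u' ih =>
      intro v hp
      obtain ⟨A, B, rfl, hadjA, _⟩ := firstOcc hp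
      have hb : SEq G (A ++ x :: B) (x :: (A ++ B)) := seq_bubble hadjA
      have hp' : ∀ a b : Fin n, ¬ G.Adj a b → proj a b u' = proj a b (A ++ B) := by
        intro a b hab
        have h1 : proj a b (x :: u') = proj a b (x :: (A ++ B)) :=
          (hp a b hab).trans (hb.proj_eq hab)
        by_cases hx : x.1 = a ∨ x.1 = b
        · rw [proj_cons_keep hx, proj_cons_keep hx] at h1
          exact (List.cons.injEq _ _ _ _ ▸ h1).2
        · rwa [proj_cons_drop hx, proj_cons_drop hx] at h1
      exact ((SEq.cons x (ih (A ++ B) hp')).trans hb.symm)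

/-- Left cancellation for swap equivalence. -/
lemma seq_cons_cancel {x : Letter n} {u v : List (Letter n)}
    (h : SEq G (x :: u) (x :: v)) : SEq G u v := by
  apply seq_of_proj
  intro a b hab
  have h1 := h.proj_eq hab
  by_cases hx : x.1 = a ∨ x.1 = b
  · rw [proj_cons_keep hx, proj_cons_keep hx] at h1
    exact (List.cons.injEq _ _ _ _ ▸ h1).2
  · rwa [proj_cons_drop hx, proj_cons_drop hx] at h1

/-- Head extraction: if `x :: u ~ v` then `v` decomposes around an occurrence of `x`. -/
lemma head_extract {x : Letter n} {u v : List (Letter n)} (h : SEq G (x :: u) v) :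
    ∃ A B, v = A ++ x :: B ∧ (∀ r ∈ A, G.Adj x.1 r.1) ∧ SEq G u (A ++ B) := by
  obtain ⟨A, B, rfl, hadjA, _⟩ := firstOcc (fun a b hab => h.proj_eq hab)
  refine ⟨A, B, rfl, hadjA, ?_⟩
  have hb : SEq G (A ++ x :: B) (x :: (A ++ B)) := seq_bubble hadjA
  exact seq_cons_cancel (h.trans hb)

/-- Tail extraction: if `u ~ N ++ [p]` then `u` decomposes around an occurrence of `p`
followed only by letters commuting with it. -/
lemma last_extract {p : Letter n} {u N : List (Letter n)} (h : SEq G u (N ++ [p])) :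
    ∃ A B, u = A ++ p :: B ∧ (∀ r ∈ B, G.Adj p.1 r.1) := by
  have h1 : SEq G (p :: N.reverse) u.reverse := by
    have := h.reverse.symm
    rwa [List.reverse_append, List.reverse_singleton, List.singleton_append] at this
  obtain ⟨A, B, hv, hadjA, _⟩ := head_extract h1
  refine ⟨B.reverse, A.reverse, ?_, ?_⟩
  · have := congrArg List.reverse hv
    rwa [List.reverse_reverse, List.reverse_append, List.reverse_cons,
      List.append_assoc, List.singleton_append] at this
  · intro r hr
    exact hadjA r (List.mem_reverse.1 hr)

end RaagPal
namespace RaagPal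

variable {n : ℕ} {G : SimpleGraph (Fin n)}

/-! ### Reduced words -/

/-- A word is reducible if some swap-equivalent word contains an adjacent inverse pair. -/
def Reducible (G : SimpleGraph (Fin n)) (L : List (Letter n)) : Prop :=
  ∃ (A B : List (Letter n)) (y : Letter n), SEq G L (A ++ y :: linv y :: B)

/-- A reduced word. -/
def Reduced (G : SimpleGraph (Fin n)) (L : List (Letter n)) : Prop := ¬ Reducible G L

lemma Reducible.of_seq {L M : List (Letter n)} (h : SEq G L M) (hM : Reducible G M) :
    Reducible G L := by
  obtain ⟨A, B, y, hseq⟩ := hM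
  exact ⟨A, B, y, h.trans hseq⟩

lemma Reduced.of_seq {L M : List (Letter n)} (h : SEq G L M) (hL : Reduced G L) :
    Reduced G M := fun hM => hL (Reducible.of_seq h hM)

lemma reduced_nil : Reduced G ([] : List (Letter n)) := by
  rintro ⟨A, B, y, hseq⟩
  have := hseq.length_eq
  simp only [List.length_nil, List.length_append, List.length_cons] at this
  omega

lemma Reducible.cons {x : Letter n} {L : List (Letter n)} (h : Reducible G L) :
    Reducible G (x :: L) := by
  obtain ⟨A, B, y, hseq⟩ := h
  exact ⟨x :: A, B, y, SEq.cons x hseq⟩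

lemma Reduced.tail {x : Letter n} {L : List (Letter n)} (h : Reduced G (x :: L)) :
    Reduced G L := fun hr => h hr.cons

/-- If a reduced word absorbs a head letter, the rest is reduced. -/
lemma reduced_of_head {x : Letter n} {L K : List (Letter n)} (hL : Reduced G L)
    (h : SEq G L (x :: K)) : Reduced G K :=
  (hL.of_seq h).tail

/-- Key dichotomy: if `x :: L` is reducible then either `L` absorbs `x⁻¹` or `L` itself
is reducible. -/
lemma reducible_cons_elim {x : Letter n} {L : List (Letter n)} (h : Reducible G (x :: L)) :
    (∃ K, SEq G L (linv x :: K)) ∨ Reducible G L := by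
  obtain ⟨A, B, y, hseq⟩ := h
  obtain ⟨w₁, w₂, heq, hadj, hL⟩ := head_extract hseq
  rcases List.append_eq_append_iff.1 heq with ⟨a1, h1, h2⟩ | ⟨c1, h1, h2⟩
  · -- w₁ = A ++ a1,  y :: linv y :: B = a1 ++ x :: w₂
    cases a1 with
    | nil =>
        simp only [List.nil_append, List.cons.injEq] at h2
        obtain ⟨rfl, h3⟩ := h2
        left
        rw [← h3] at hL
        exact ⟨w₁ ++ B, hL.trans (seq_bubble (x := linv y)
          (fun r hr => by rw [linv_fst]; exact hadj r hr))⟩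
    | cons c a2 =>
        simp only [List.cons_append, List.cons.injEq] at h2
        obtain ⟨rfl, h3⟩ := h2
        cases a2 with
        | nil =>
            simp only [List.nil_append, List.cons.injEq] at h3
            obtain ⟨hx, h4⟩ := h3
            exfalso
            have hyw : y ∈ w₁ := by rw [h1]; simp
            have := hadj y hyw
            rw [← hx, linv_fst] at this
            exact G.irrefl this
        | cons d a3 =>
            simp only [List.cons_append, List.cons.injEq] at h3
            obtain ⟨hd, h4⟩ := h3
            right
            rw [h1, ← hd] at hL
            refine ⟨A, a3 ++ w₂, y, hL.trans ?_⟩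
            simp only [List.append_assoc, List.cons_append]
            exact SEq.refl _
  · -- A = w₁ ++ c1, x :: w₂ = c1 ++ y :: linv y :: B
    cases c1 with
    | nil =>
        simp only [List.nil_append, List.cons.injEq] at h2
        obtain ⟨rfl, h3⟩ := h2
        left
        rw [h3] at hL
        exact ⟨w₁ ++ B, hL.trans (seq_bubble (x := linv x)
          (fun r hr => by rw [linv_fst]; exact hadj r hr))⟩
    | cons c c2 =>
        simp only [List.cons_append, List.cons.injEq] at h2
        obtain ⟨hc, h3⟩ := h2
        right
        rw [h3] at hL
        refine ⟨w₁ ++ c2, B, y, hL.trans ?_⟩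
        simp only [List.append_assoc]
        exact SEq.refl _

lemma reduced_cons {x : Letter n} {L : List (Letter n)} (hL : Reduced G L)
    (h : ¬ ∃ K, SEq G L (linv x :: K)) : Reduced G (x :: L) :=
  fun hr => (reducible_cons_elim hr).elim h hL

/-! ### Normal forms and the van der Waerden action -/

/-- The type of reduced words. -/
def RWord (G : SimpleGraph (Fin n)) := {L : List (Letter n) // Reduced G L}

instance rwordSetoid (G : SimpleGraph (Fin n)) : Setoid (RWord G) where
  r L M := SEq G L.1 M.1
  iseqv := ⟨fun L => SEq.refl _, SEq.symm, SEq.trans⟩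

/-- Normal forms: swap classes of reduced words. -/
def NF (G : SimpleGraph (Fin n)) := Quotient (rwordSetoid G)

def nfMk (L : List (Letter n)) (h : Reduced G L) : NF G := Quotient.mk _ ⟨L, h⟩

lemma nfMk_eq {L M : List (Letter n)} (hL : Reduced G L) (hM : Reduced G M)
    (h : SEq G L M) : nfMk L hL = nfMk M hM := Quotient.sound h

lemma nfMk_exact {L M : List (Letter n)} {hL : Reduced G L} {hM : Reduced G M}
    (h : nfMk L hL = nfMk M hM) : SEq G L M := Quotient.exact h

open Classical in
/-- The raw action of a letter on a reduced word. -/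
noncomputable def tApp (x : Letter n) (L : RWord G) : NF G :=
  if h : ∃ K, SEq G L.1 (linv x :: K) then
    nfMk h.choose (reduced_of_head L.2 h.choose_spec)
  else nfMk (x :: L.1) (reduced_cons L.2 h)

/-- The action of a letter on normal forms. -/
noncomputable def tFun (x : Letter n) : NF G → NF G :=
  Quotient.lift (tApp x) (by
    intro L M hLM
    change SEq G L.1 M.1 at hLM
    by_cases hL : ∃ K, SEq G L.1 (linv x :: K)
    · have hM : ∃ K, SEq G M.1 (linv x :: K) := ⟨hL.choose, hLM.symm.trans hL.choose_spec⟩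
      unfold tApp; rw [dif_pos hL, dif_pos hM]
      refine nfMk_eq _ _ (seq_cons_cancel (x := linv x) ?_)
      exact hL.choose_spec.symm.trans (hLM.trans hM.choose_spec)
    · have hM : ¬ ∃ K, SEq G M.1 (linv x :: K) := by
        rintro ⟨K, hK⟩
        exact hL ⟨K, hLM.trans hK⟩
      unfold tApp; rw [dif_neg hL, dif_neg hM]
      exact nfMk_eq _ _ (SEq.cons x hLM))

lemma tFun_absorb {x : Letter n} {K : List (Letter n)} (L : RWord G) (hK : Reduced G K)
    (h : SEq G L.1 (linv x :: K)) : tFun x (Quotient.mk _ L) = nfMk K hK := by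
  have hL : ∃ K', SEq G L.1 (linv x :: K') := ⟨K, h⟩
  show tApp x L = nfMk K hK
  unfold tApp; rw [dif_pos hL]
  refine nfMk_eq _ _ (seq_cons_cancel (x := linv x) ?_)
  exact hL.choose_spec.symm.trans h

lemma tFun_push {x : Letter n} (L : RWord G) (h : ¬ ∃ K, SEq G L.1 (linv x :: K)) :
    tFun x (Quotient.mk _ L) = nfMk (x :: L.1) (reduced_cons L.2 h) := by
  show tApp x L = _
  unfold tApp; rw [dif_neg h]

/-- A reduced word does not absorb the inverse of a letter just pushed on. -/
lemma no_absorb_push {x : Letter n} {L : List (Letter n)} (hL : Reduced G (x :: L)) :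
    ¬ ∃ K, SEq G L (linv x :: K) := by
  rintro ⟨K, hK⟩
  exact hL ⟨[], K, x, by simpa using SEq.cons x hK⟩

lemma tFun_left_inv (x : Letter n) (z : NF G) : tFun (linv x) (tFun x z) = z := by
  induction z using Quotient.ind with
  | _ L =>
    by_cases h : ∃ K, SEq G L.1 (linv x :: K)
    · obtain ⟨K, hK⟩ := h
      have hKred : Reduced G K := reduced_of_head L.2 hK
      rw [tFun_absorb L hKred hK]
      have hred : Reduced G (linv x :: K) := L.2.of_seq hK
      have hnoabs : ¬ ∃ K', SEq G K (linv (linv x) :: K') :=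
        no_absorb_push (x := linv x) hred
      rw [show nfMk K hKred = Quotient.mk (rwordSetoid G) (⟨K, hKred⟩ : RWord G) from rfl]
      rw [tFun_push (⟨K, hKred⟩ : RWord G) hnoabs]
      exact nfMk_eq _ _ hK.symm
    · rw [tFun_push L h]
      have habs : SEq G (x :: L.1) (linv (linv x) :: L.1) := by
        rw [linv_linv]
      rw [show nfMk (x :: L.1) (reduced_cons L.2 h) =
        Quotient.mk (rwordSetoid G) (⟨x :: L.1, reduced_cons L.2 h⟩ : RWord G) from rfl]
      rw [tFun_absorb (⟨x :: L.1, reduced_cons L.2 h⟩ : RWord G) L.2 habs]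
      rfl

/-- The permutation of normal forms induced by a letter. -/
noncomputable def tEquiv (x : Letter n) : Equiv (NF G) (NF G) where
  toFun := tFun x
  invFun := tFun (linv x)
  left_inv := tFun_left_inv x
  right_inv := fun z => by
    have := tFun_left_inv (G := G) (linv x) z
    rwa [linv_linv] at this

/-- Shifting an absorbed letter across another absorbed letter. -/
lemma absorb_shift {c d : Letter n} (hcd : c.1 ≠ d.1) {L K M : List (Letter n)}
    (h1 : SEq G L (d :: K)) (h2 : SEq G L (c :: M)) :
    ∃ M', SEq G K (c :: M') := by
  have h3 : SEq G (c :: M) (d :: K) := h2.symm.trans h1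
  obtain ⟨A, B, hdec, hadjA, _⟩ := head_extract h3
  cases A with
  | nil =>
      exfalso
      simp only [List.nil_append, List.cons.injEq] at hdec
      exact hcd (by rw [hdec.1])
  | cons a A' =>
      simp only [List.cons_append, List.cons.injEq] at hdec
      obtain ⟨rfl, hKdec⟩ := hdec
      refine ⟨A' ++ B, ?_⟩
      rw [hKdec]
      exact seq_bubble (fun r hr => hadjA r (List.mem_cons_of_mem _ hr))

lemma tFun_comm_aux {x y : Letter n} (hadj : G.Adj x.1 y.1) (L : RWord G)
    (hY : ∃ K, SEq G L.1 (linv y :: K)) (hX : ¬ ∃ K, SEq G L.1 (linv x :: K)) :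
    tFun x (tFun y (Quotient.mk _ L)) = tFun y (tFun x (Quotient.mk _ L)) := by
  obtain ⟨Ky, hKy⟩ := hY
  have hKyred : Reduced G Ky := reduced_of_head L.2 hKy
  have hXKy : ¬ ∃ M, SEq G Ky (linv x :: M) := by
    rintro ⟨M, hM⟩
    refine hX ⟨linv y :: M, ?_⟩
    refine (hKy.trans (SEq.cons (linv y) hM)).trans (SEq.single ?_)
    exact ⟨[], M, linv y, linv x, by simpa using hadj.symm, rfl, rfl⟩
  -- LHS
  rw [tFun_absorb L hKyred hKy]
  rw [show nfMk Ky hKyred = Quotient.mk (rwordSetoid G) (⟨Ky, hKyred⟩ : RWord G) from rfl]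
  rw [tFun_push (⟨Ky, hKyred⟩ : RWord G) hXKy]
  -- RHS
  rw [tFun_push L hX]
  have habs : SEq G (x :: L.1) (linv y :: (x :: Ky)) := by
    refine ((SEq.cons x hKy).trans (SEq.single ?_))
    exact ⟨[], Ky, x, linv y, by simpa using hadj, rfl, rfl⟩
  rw [show nfMk (x :: L.1) (reduced_cons L.2 hX) =
    Quotient.mk (rwordSetoid G) (⟨x :: L.1, reduced_cons L.2 hX⟩ : RWord G) from rfl]
  rw [tFun_absorb (⟨x :: L.1, reduced_cons L.2 hX⟩ : RWord G) (reduced_cons hKyred hXKy) habs]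

lemma tFun_comm {x y : Letter n} (hadj : G.Adj x.1 y.1) (z : NF G) :
    tFun x (tFun y z) = tFun y (tFun x z) := by
  have hne : x.1 ≠ y.1 := G.ne_of_adj hadj
  induction z using Quotient.ind with
  | _ L =>
    by_cases hX : ∃ K, SEq G L.1 (linv x :: K) <;>
      by_cases hY : ∃ K, SEq G L.1 (linv y :: K)
    · -- both absorb
      obtain ⟨Kx, hKx⟩ := hX
      obtain ⟨Ky, hKy⟩ := hY
      have hKxred : Reduced G Kx := reduced_of_head L.2 hKx
      have hKyred : Reduced G Ky := reduced_of_head L.2 hKy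
      obtain ⟨M, hM⟩ := absorb_shift (c := linv x) (d := linv y)
        (by simpa using hne) hKy hKx
      obtain ⟨M', hM'⟩ := absorb_shift (c := linv y) (d := linv x)
        (by simpa using hne.symm) hKx hKy
      have hMred : Reduced G M := reduced_of_head hKyred hM
      have hM'red : Reduced G M' := reduced_of_head hKxred hM'
      rw [tFun_absorb L hKyred hKy, tFun_absorb L hKxred hKx]
      rw [show nfMk Ky hKyred = Quotient.mk (rwordSetoid G) (⟨Ky, hKyred⟩ : RWord G) from rfl,
          show nfMk Kx hKxred = Quotient.mk (rwordSetoid G) (⟨Kx, hKxred⟩ : RWord G) from rfl]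
      rw [tFun_absorb (⟨Ky, hKyred⟩ : RWord G) hMred hM, tFun_absorb (⟨Kx, hKxred⟩ : RWord G) hM'red hM']
      refine nfMk_eq _ _ ?_
      -- M ~ M' : L ~ y⁻¹::Ky ~ y⁻¹::x⁻¹::M ~ x⁻¹::y⁻¹::M and L ~ x⁻¹::Kx ~ x⁻¹::y⁻¹::M'
      have c1 : SEq G L.1 (linv x :: linv y :: M) := by
        refine (hKy.trans (SEq.cons (linv y) hM)).trans (SEq.single ?_)
        exact ⟨[], M, linv y, linv x, by simpa using hadj.symm, rfl, rfl⟩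
      have c2 : SEq G L.1 (linv x :: linv y :: M') := hKx.trans (SEq.cons (linv x) hM')
      have := seq_cons_cancel (seq_cons_cancel (c1.symm.trans c2))
      exact this
    · exact tFun_comm_aux hadj.symm L hX hY |>.symm
    · exact tFun_comm_aux hadj L hY hX
    · -- neither absorbs
      have hpushx : ¬ ∃ K, SEq G (y :: L.1) (linv x :: K) := by
        rintro ⟨K, hK⟩
        obtain ⟨A, B, hdec, hadjA, hrest⟩ := head_extract hK.symm
        -- y :: L.1 = A ++ linv x :: B
        cases A with
        | nil =>
            simp only [List.nil_append, List.cons.injEq] at hdec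
            exact hne (by rw [← linv_fst x, ← hdec.1])
        | cons a A' =>
            simp only [List.cons_append, List.cons.injEq] at hdec
            obtain ⟨rfl, hLd⟩ := hdec
            refine hX ⟨A' ++ B, ?_⟩
            rw [hLd]
            exact seq_bubble (fun r hr => hadjA r (List.mem_cons_of_mem _ hr))
      have hpushy : ¬ ∃ K, SEq G (x :: L.1) (linv y :: K) := by
        rintro ⟨K, hK⟩
        obtain ⟨A, B, hdec, hadjA, hrest⟩ := head_extract hK.symm
        cases A with
        | nil =>
            simp only [List.nil_append, List.cons.injEq] at hdec
            exact hne.symm (by rw [← linv_fst y, ← hdec.1])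
        | cons a A' =>
            simp only [List.cons_append, List.cons.injEq] at hdec
            obtain ⟨rfl, hLd⟩ := hdec
            refine hY ⟨A' ++ B, ?_⟩
            rw [hLd]
            exact seq_bubble (fun r hr => hadjA r (List.mem_cons_of_mem _ hr))
      rw [tFun_push L hX, tFun_push L hY]
      rw [show nfMk (y :: L.1) (reduced_cons L.2 hY) =
        Quotient.mk (rwordSetoid G) (⟨y :: L.1, reduced_cons L.2 hY⟩ : RWord G) from rfl,
        show nfMk (x :: L.1) (reduced_cons L.2 hX) =
        Quotient.mk (rwordSetoid G) (⟨x :: L.1, reduced_cons L.2 hX⟩ : RWord G) from rfl]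
      rw [tFun_push (⟨y :: L.1, reduced_cons L.2 hY⟩ : RWord G) hpushx,
        tFun_push (⟨x :: L.1, reduced_cons L.2 hX⟩ : RWord G) hpushy]
      refine nfMk_eq _ _ (SEq.single ?_)
      exact ⟨[], L.1, x, y, hadj, rfl, rfl⟩

private lemma psi_rels :
    ∀ r ∈ raagRels G, FreeGroup.lift (fun v => (tEquiv (G := G) (v, true) : Equiv.Perm (NF G))) r = 1 := by
  rintro r ⟨i, j, hij, rfl⟩
  simp only [map_mul, map_inv, FreeGroup.lift_apply_of]
  have hc : (tEquiv (G := G) ((i, true)) : Equiv.Perm (NF G)) * tEquiv (j, true) =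
      tEquiv (j, true) * tEquiv (i, true) := by
    apply Equiv.ext
    intro z
    show tFun (i, true) (tFun (j, true) z) = tFun (j, true) (tFun (i, true) z)
    exact tFun_comm hij z
  rw [hc]
  group

/-- The van der Waerden homomorphism to permutations of normal forms. -/
noncomputable def Psi (G : SimpleGraph (Fin n)) : RAAG G →* Equiv.Perm (NF G) :=
  PresentedGroup.toGroup (f := fun v => (tEquiv (G := G) (v, true) : Equiv.Perm (NF G))) psi_rels

lemma Psi_gen (v : Fin n) : Psi G (gen G v) = tEquiv (v, true) :=
  PresentedGroup.toGroup.of psi_rels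

lemma Psi_letter (p : Letter n) : Psi G (letter G p) = tEquiv p := by
  rcases p with ⟨v, b⟩
  cases b
  · show Psi G (letter G (v, false)) = _
    have : letter G (v, false) = (gen G v)⁻¹ := by simp [letter]
    rw [this, map_inv, Psi_gen]
    apply Equiv.ext
    intro z
    show (tEquiv (G := G) (v, true)).symm z = tFun (v, false) z
    rfl
  · exact Psi_gen v

lemma Psi_wordProd (L : List (Letter n)) (h : Reduced G L) :
    Psi G (wordProd G L) (nfMk [] reduced_nil) = nfMk L h := by
  induction L with
  | nil => simp [wordProd]
  | cons p M ih =>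
      have hM : Reduced G M := h.tail
      rw [wordProd_cons, map_mul, Psi_letter]
      have h1 : (tEquiv p * Psi G (wordProd G M) : Equiv.Perm (NF G)) (nfMk [] reduced_nil) =
          tFun p (Psi G (wordProd G M) (nfMk [] reduced_nil)) := rfl
      rw [h1, ih hM]
      have hnoabs : ¬ ∃ K, SEq G M (linv p :: K) := no_absorb_push h
      rw [show nfMk M hM = Quotient.mk (rwordSetoid G) (⟨M, hM⟩ : RWord G) from rfl]
      rw [tFun_push (⟨M, hM⟩ : RWord G) hnoabs]

/-- Words of minimal length representing an element are reduced. -/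
lemma reduced_of_minimal {L : List (Letter n)}
    (hmin : ∀ K, wordProd G K = wordProd G L → L.length ≤ K.length) : Reduced G L := by
  rintro ⟨A, B, y, hseq⟩
  have h1 : wordProd G L = wordProd G (A ++ y :: linv y :: B) := hseq.wordProd_eq
  have h2 : wordProd G (A ++ B) = wordProd G L := by
    rw [h1, wordProd_append, wordProd_append, wordProd_cons, wordProd_cons,
      ← mul_assoc (letter G y), letter_mul_linv, one_mul]
  have h3 := hmin _ h2
  have h4 := hseq.length_eq
  simp only [List.length_append, List.length_cons] at h3 h4
  omega

/-- The normal form theorem: two reduced words representing the same element of the RAAG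
are swap equivalent. -/
lemma seq_of_reduced {L L' : List (Letter n)} (hL : Reduced G L) (hL' : Reduced G L')
    (h : wordProd G L = wordProd G L') : SEq G L L' := by
  have h1 := Psi_wordProd L hL
  have h2 := Psi_wordProd L' hL'
  rw [h] at h1
  exact nfMk_exact (h1.symm.trans h2)

end RaagPal
namespace RaagPal

variable {n : ℕ} {G : SimpleGraph (Fin n)}

/-! ### The structure theorem for reversal-invariant elements -/

/-- A clique word: all letters have pairwise equal or adjacent vertices. -/
def Clique (G : SimpleGraph (Fin n)) (K : List (Letter n)) : Prop :=
  ∀ p ∈ K, ∀ q ∈ K, p.1 = q.1 ∨ G.Adj p.1 q.1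

lemma commute_wordProd {x : RAAG G} {M : List (Letter n)}
    (h : ∀ q ∈ M, Commute x (letter G q)) : Commute x (wordProd G M) := by
  induction M with
  | nil => simp [Commute.one_right]
  | cons q M ih =>
      rw [wordProd_cons]
      exact (h q (List.mem_cons_self (a := q) (l := M))).mul_right
        (ih (fun r hr => h r (List.mem_cons_of_mem q hr)))

lemma struct_aux : ∀ (l : ℕ) (L : List (Letter n)), L.length = l →
    (∀ K, wordProd G K = wordProd G L → L.length ≤ K.length) →
    RR G (wordProd G L) = wordProd G L →
    ∃ U C, SEq G L (U ++ C ++ U.reverse) ∧ Clique G C := by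
  intro l
  induction l using Nat.strong_induction_on with
  | _ l IH =>
    intro L hlen hmin hRR
    cases L with
    | nil => exact ⟨[], [], SEq.refl _, fun p hp => by simp at hp⟩
    | cons p M =>
      have hred : Reduced G (p :: M) := reduced_of_minimal hmin
      have hweq : wordProd G ((p :: M).reverse) = wordProd G (p :: M) := by
        rw [wordProd_reverse, hRR]
      have hredrev : Reduced G ((p :: M).reverse) := by
        apply reduced_of_minimal
        intro K hK
        rw [hweq] at hK
        have := hmin K hK
        simpa using this
      have hseq : SEq G (p :: M) (M.reverse ++ [p]) := by
        have h1 : SEq G (p :: M) ((p :: M).reverse) :=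
          seq_of_reduced hred hredrev hweq.symm
        rwa [List.reverse_cons] at h1
      obtain ⟨W₁, W₂, hdec, hadjB⟩ := last_extract hseq
      cases W₁ with
      | nil =>
          -- L = p :: W₂ with p commuting with everything in W₂ = M
          simp only [List.nil_append, List.cons.injEq] at hdec
          obtain ⟨-, hM⟩ := hdec
          subst hM
          have hcommM : ∀ r ∈ M, G.Adj p.1 r.1 := hadjB
          have hcomm : Commute (letter G p) (wordProd G M) :=
            commute_wordProd (fun q hq => letter_comm (hcommM q hq))
          have hRRM : RR G (wordProd G M) = wordProd G M := by
            have h1 : RR G (wordProd G (p :: M)) = RR G (wordProd G M) * letter G p := by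
              rw [wordProd_cons, RR_mul, RR_letter]
            rw [hRR, wordProd_cons, hcomm.eq] at h1
            exact (mul_right_cancel h1).symm
          have hminM : ∀ K, wordProd G K = wordProd G M → M.length ≤ K.length := by
            intro K hK
            have h1 : wordProd G (p :: K) = wordProd G (p :: M) := by
              rw [wordProd_cons, wordProd_cons, hK]
            have := hmin (p :: K) h1
            simpa using this
          have hlt : M.length < l := by simp at hlen; omega
          obtain ⟨U, C, hUC, hcl⟩ := IH M.length hlt M rfl hminM hRRM
          have hmemM : ∀ r ∈ U ++ C ++ U.reverse, r ∈ M := fun r hr =>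
            (hUC.perm.mem_iff).2 hr
          refine ⟨U, p :: C, ?_, ?_⟩
          · have h1 : SEq G (p :: M) (p :: (U ++ C ++ U.reverse)) := SEq.cons p hUC
            have h2 : SEq G (U ++ p :: (C ++ U.reverse)) (p :: (U ++ (C ++ U.reverse))) :=
              seq_bubble (fun r hr => hcommM r (hmemM r (by simp [hr])))
            refine h1.trans ?_
            have h3 : p :: (U ++ C ++ U.reverse) = p :: (U ++ (C ++ U.reverse)) := by
              simp [List.append_assoc]
            rw [h3]
            have h4 : U ++ (p :: C) ++ U.reverse = U ++ p :: (C ++ U.reverse) := by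
              simp [List.append_assoc]
            rw [h4]
            exact h2.symm
          · intro a ha b hb
            rcases List.mem_cons.1 ha with rfl | ha' <;>
              rcases List.mem_cons.1 hb with rfl | hb'
            · exact Or.inl rfl
            · exact Or.inr (hcommM b (hmemM b (by simp [hb'])))
            · exact Or.inr (hcommM a (hmemM a (by simp [ha']))).symm
            · exact hcl a ha' b hb'
      | cons q W₁' =>
          simp only [List.cons_append, List.cons.injEq] at hdec
          obtain ⟨rfl, hM⟩ := hdec
          -- M = W₁' ++ p :: W₂
          subst hM
          set N := W₁' ++ W₂ with hN
          have hMN : SEq G (W₁' ++ p :: W₂) (N ++ [p]) := by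
            have := seq_bubble_back (x := p) (A := W₁') (B := W₂) hadjB
            simpa [hN, List.append_assoc] using this
          have hLseq : SEq G (p :: (W₁' ++ p :: W₂)) (p :: (N ++ [p])) := SEq.cons p hMN
          have hw : wordProd G (p :: (W₁' ++ p :: W₂)) =
              letter G p * wordProd G N * letter G p := by
            rw [hLseq.wordProd_eq, wordProd_cons, wordProd_append, wordProd_singleton,
              mul_assoc]
          have hRRN : RR G (wordProd G N) = wordProd G N := by
            have h1 := hRR
            rw [hw] at h1
            rw [RR_mul, RR_mul, RR_letter, ← mul_assoc] at h1
            exact mul_left_cancel (mul_right_cancel h1)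
          have hminN : ∀ K, wordProd G K = wordProd G N → N.length ≤ K.length := by
            intro K hK
            have h1 : wordProd G (p :: (K ++ [p])) = wordProd G (p :: (W₁' ++ p :: W₂)) := by
              rw [hw, wordProd_cons, wordProd_append, wordProd_singleton, hK, mul_assoc]
            have h2 := hmin _ h1
            have h3 := hLseq.length_eq
            simp only [List.length_cons, List.length_append, List.length_cons] at h2 h3 ⊢
            omega
          have hlt : N.length < l := by
            have h3 := hLseq.length_eq
            simp only [List.length_cons, List.length_append] at h3 hlen ⊢
            omega
          obtain ⟨U₁, C, hUC, hcl⟩ := IH N.length hlt N rfl hminN hRRN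
          refine ⟨p :: U₁, C, ?_, hcl⟩
          have h1 : SEq G (p :: (N ++ [p])) (p :: ((U₁ ++ C ++ U₁.reverse) ++ [p])) :=
            SEq.cons p (SEq.append_right [p] hUC)
          have h2 : (p :: U₁) ++ C ++ (p :: U₁).reverse =
              p :: ((U₁ ++ C ++ U₁.reverse) ++ [p]) := by
            simp [List.append_assoc]
          rw [h2]
          exact hLseq.trans h1

/-- Structure theorem: a reversal-invariant element of the RAAG is a "palindrome with a
clique core". -/
lemma struct {w : RAAG G} (hw : RR G w = w) :
    ∃ (u : RAAG G) (C : List (Letter n)), Clique G C ∧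
      w = u * wordProd G C * RR G u := by
  classical
  have hex : ∃ k, ∃ L : List (Letter n), L.length = k ∧ wordProd G L = w := by
    obtain ⟨L, hL⟩ := exists_word w
    exact ⟨L.length, L, rfl, hL⟩
  obtain ⟨L, hlen, hrep⟩ := Nat.find_spec hex
  have hmin : ∀ K, wordProd G K = wordProd G L → L.length ≤ K.length := by
    intro K hK
    have h1 : Nat.find hex ≤ K.length := Nat.find_min' hex ⟨K, rfl, hK.trans hrep⟩
    omega
  obtain ⟨U, C, hUC, hcl⟩ := struct_aux L.length L rfl hmin (by rw [hrep, hw])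
  refine ⟨wordProd G U, C, hcl, ?_⟩
  have h1 := hUC.wordProd_eq
  rw [hrep] at h1
  rw [h1, wordProd_append, wordProd_append, wordProd_reverse]

end RaagPal
namespace RaagPal

variable {n : ℕ} {G : SimpleGraph (Fin n)}

/-! ### Exponent sums and parity -/

lemma expSum_gen (u i : Fin n) :
    expSum G u (gen G i) = Multiplicative.ofAdd (if i = u then (1 : ℤ) else 0) :=
  PresentedGroup.toGroup.of _

lemma abVec_gen (i : Fin n) :
    abVec G (gen G i) = fun u => if i = u then (1 : ℤ) else 0 := by
  funext u
  rw [abVec, expSum_gen]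
  rfl

lemma abVec_mul (x y : RAAG G) : abVec G (x * y) = abVec G x + abVec G y := by
  funext u
  simp [abVec, map_mul]

@[simp] lemma abVec_one : abVec G 1 = 0 := by
  funext u
  simp [abVec]

lemma abVec_inv (x : RAAG G) : abVec G x⁻¹ = - abVec G x := by
  funext u
  simp [abVec, map_inv]

lemma abVec_letter (p : Letter n) :
    abVec G (letter G p) = fun u => if p.1 = u then (if p.2 then (1 : ℤ) else -1) else 0 := by
  rcases p with ⟨v, b⟩
  cases b
  · have : letter G (v, false) = (gen G v)⁻¹ := by simp [letter]
    rw [this, abVec_inv, abVec_gen]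
    funext u
    by_cases h : v = u <;> simp [h]
  · have : letter G (v, true) = gen G v := by simp [letter]
    rw [this, abVec_gen]
    funext u
    by_cases h : v = u <;> simp [h]

private def expSumRR (u : Fin n) : RAAG G →* Multiplicative ℤ where
  toFun w := expSum G u (RR G w)
  map_one' := by simp
  map_mul' x y := by
    rw [RR_mul, map_mul, mul_comm]

lemma abVec_RR (w : RAAG G) : abVec G (RR G w) = abVec G w := by
  have h : (expSumRR (G := G)) = (fun u => expSum G u) := by
    funext u
    apply hom_ext
    intro i
    simp [expSumRR]
  funext u
  have := DFunLike.congr_fun (congrFun h u) w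
  simp only [expSumRR, MonoidHom.coe_mk, OneHom.coe_mk] at this
  simp [abVec, this]

/-- Signed count of occurrences of the vertex `v` in a word. -/
def zcnt (v : Fin n) (L : List (Letter n)) : ℤ :=
  (L.map fun p => if p.1 = v then (if p.2 then (1 : ℤ) else -1) else 0).sum

@[simp] lemma zcnt_nil (v : Fin n) : zcnt v [] = 0 := rfl

lemma zcnt_cons (v : Fin n) (p : Letter n) (L : List (Letter n)) :
    zcnt v (p :: L) = (if p.1 = v then (if p.2 then (1 : ℤ) else -1) else 0) + zcnt v L := by
  simp [zcnt]

lemma zcnt_append (v : Fin n) (A B : List (Letter n)) :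
    zcnt v (A ++ B) = zcnt v A + zcnt v B := by
  simp [zcnt]

lemma zcnt_perm {A B : List (Letter n)} (h : A.Perm B) (v : Fin n) : zcnt v A = zcnt v B :=
  List.Perm.sum_eq (h.map _)

lemma zcnt_eq_zero_of_not_mem {v : Fin n} {L : List (Letter n)}
    (h : ∀ p ∈ L, p.1 ≠ v) : zcnt v L = 0 := by
  induction L with
  | nil => rfl
  | cons p L ih =>
      rw [zcnt_cons, if_neg (h p (List.mem_cons_self (a := p) (l := L))),
        ih (fun q hq => h q (List.mem_cons_of_mem p hq)), zero_add]

lemma abVec_wordProd (L : List (Letter n)) (v : Fin n) :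
    abVec G (wordProd G L) v = zcnt v L := by
  induction L with
  | nil => simp
  | cons p L ih =>
      rw [wordProd_cons, abVec_mul, zcnt_cons, abVec_letter]
      simp only [Pi.add_apply]
      rw [ih]

/-- The mod-two basis vector. -/
def dvec (i : Fin n) : Fin n → ZMod 2 := fun u => if i = u then 1 else 0

lemma dvec_inj {i j : Fin n} (h : dvec i = dvec j) : i = j := by
  by_contra hne
  have h1 := congrFun h i
  simp only [dvec] at h1
  rw [if_neg (Ne.symm hne)] at h1
  simp at h1

lemma mod2Vec_mul (x y : RAAG G) : mod2Vec G (x * y) = mod2Vec G x + mod2Vec G y := by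
  funext u
  simp [mod2Vec, abVec_mul]

@[simp] lemma mod2Vec_one : mod2Vec G 1 = 0 := by
  funext u; simp [mod2Vec]

lemma mod2Vec_RR (w : RAAG G) : mod2Vec G (RR G w) = mod2Vec G w := by
  funext u; simp [mod2Vec, abVec_RR]

lemma mod2Vec_gen (i : Fin n) : mod2Vec G (gen G i) = dvec i := by
  funext u
  simp only [mod2Vec, abVec_gen, dvec]
  by_cases h : i = u <;> simp [h]

lemma mod2Vec_letter (p : Letter n) : mod2Vec G (letter G p) = dvec p.1 := by
  funext u
  simp only [mod2Vec, abVec_letter, dvec]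
  by_cases h : p.1 = u
  · rw [if_pos h, if_pos h]
    cases p.2
    · show ((-1 : ℤ) : ZMod 2) = 1
      decide
    · show ((1 : ℤ) : ZMod 2) = 1
      simp
  · rw [if_neg h, if_neg h]
    simp

lemma mod2Vec_palElem (u : RAAG G) (m : RAAG G) : mod2Vec G (u * m * RR G u) = mod2Vec G m := by
  rw [mod2Vec_mul, mod2Vec_mul, mod2Vec_RR]
  funext v
  simp only [Pi.add_apply]
  rw [add_comm (mod2Vec G u v) (mod2Vec G m v), add_assoc, CharTwo.add_self_eq_zero, add_zero]

end RaagPal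
namespace RaagPal

variable {n : ℕ} {G : SimpleGraph (Fin n)}

/-! ### Clique words and parity splitting -/

lemma letter_comm_same {p q : Letter n} (h : p.1 = q.1) :
    Commute (letter G p) (letter G q) := by
  rcases p with ⟨a, ba⟩; rcases q with ⟨c, bc⟩
  simp only at h
  subst h
  cases ba <;> cases bc <;> simp [letter] <;>
    first
      | exact Commute.refl _
      | exact (Commute.refl _).inv_left
      | exact (Commute.refl _).inv_right
      | exact ((Commute.refl _).inv_left).inv_right

lemma clique_letter_comm {C : List (Letter n)} (hcl : Clique G C) {p q : Letter n}
    (hp : p ∈ C) (hq : q ∈ C) : Commute (letter G p) (letter G q) := by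
  rcases hcl p hp q hq with h | h
  · exact letter_comm_same h
  · exact letter_comm h

lemma wordProd_perm_clique {C C' : List (Letter n)} (hcl : Clique G C) (h : C'.Perm C) :
    wordProd G C' = wordProd G C := by
  have hpw : List.Pairwise Commute (C'.map (letter G)) := by
    rw [List.pairwise_map]
    apply List.pairwise_of_forall_mem_list
    intro a ha b hb
    exact clique_letter_comm hcl (h.subset ha) (h.subset hb)
  exact List.Perm.prod_eq' (h.map (letter G)) hpw

lemma wordProd_vertex_pow {i : Fin n} : ∀ (D : List (Letter n)), (∀ p ∈ D, p.1 = i) →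
    wordProd G D = gen G i ^ (zcnt i D) := by
  intro D
  induction D with
  | nil => simp
  | cons p D ih =>
      intro h
      have hp : p.1 = i := h p (List.mem_cons_self (a := p) (l := D))
      rw [wordProd_cons, ih (fun q hq => h q (List.mem_cons_of_mem p hq)), zcnt_cons,
        if_pos hp, zpow_add]
      congr 1
      cases hb : p.2
      · rw [show letter G p = (gen G p.1)⁻¹ by simp [letter, hb], hp]
        simp
      · rw [show letter G p = gen G p.1 by simp [letter, hb], hp]
        simp

/-- Splitting off the letters at one vertex from a clique word. -/
lemma clique_split (C : List (Letter n)) (hcl : Clique G C) (i : Fin n) :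
    wordProd G C = gen G i ^ (zcnt i C) *
      wordProd G (C.filter (fun q => !(decide (q.1 = i)))) ∧
    zcnt i (C.filter (fun q => !(decide (q.1 = i)))) = 0 ∧
    (∀ v : Fin n, v ≠ i → zcnt v (C.filter (fun q => !(decide (q.1 = i)))) = zcnt v C) := by
  set f : Letter n → Bool := fun q => decide (q.1 = i) with hf
  set Cv := C.filter f with hCv
  set Cr := C.filter (fun q => ! f q) with hCr
  have hperm : (Cv ++ Cr).Perm C := List.filter_append_perm f C
  have hCvi : ∀ p ∈ Cv, p.1 = i := by
    intro p hp
    have := List.of_mem_filter hp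
    simpa [hf] using this
  have hCri : ∀ p ∈ Cr, p.1 ≠ i := by
    intro p hp
    have := List.of_mem_filter hp
    simpa [hf] using this
  have h1 : wordProd G (Cv ++ Cr) = wordProd G C := wordProd_perm_clique hcl hperm
  have h2 : zcnt i Cr = 0 := zcnt_eq_zero_of_not_mem hCri
  have h3 : ∀ v, zcnt v Cv + zcnt v Cr = zcnt v C := by
    intro v
    rw [← zcnt_append, zcnt_perm hperm]
  have h4 : zcnt i Cv = zcnt i C := by
    have := h3 i
    omega
  refine ⟨?_, h2, ?_⟩
  · rw [← h1, wordProd_append, wordProd_vertex_pow Cv hCvi, h4]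
  · intro v hv
    have h5 : zcnt v Cv = 0 :=
      zcnt_eq_zero_of_not_mem (fun p hp h => hv (h.symm.trans (hCvi p hp)))
    have := h3 v
    omega

lemma clique_filter {C : List (Letter n)} (hcl : Clique G C) (f : Letter n → Bool) :
    Clique G (C.filter f) := fun p hp q hq =>
  hcl p (List.mem_of_mem_filter hp) q (List.mem_of_mem_filter hq)

lemma exists_vertex_of_zcnt_ne {C : List (Letter n)} {v : Fin n} (h : zcnt v C ≠ 0) :
    ∃ p ∈ C, p.1 = v := by
  by_contra hc
  push_neg at hc
  exact h (zcnt_eq_zero_of_not_mem hc)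

/-- Even clique words are "squares" built from their own vertices. -/
lemma clique_even : ∀ (m : ℕ) (C : List (Letter n)), C.length = m → Clique G C →
    (∀ v : Fin n, (2 : ℤ) ∣ zcnt v C) →
    ∃ u : RAAG G, wordProd G C = u * u ∧ RR G u = u ∧
      ∀ x : RAAG G, (∀ p ∈ C, Commute x (gen G p.1)) → Commute x u := by
  intro m
  induction m using Nat.strong_induction_on with
  | _ m IH =>
    intro C hlen hcl hev
    cases C with
    | nil => exact ⟨1, by simp, by simp, fun x _ => Commute.one_right x⟩
    | cons p C0 =>
      set v := p.1 with hv
      obtain ⟨hsplit, hzr, hzother⟩ := clique_split (p :: C0) hcl v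
      set Cr := (p :: C0).filter (fun q => !(decide (q.1 = v))) with hCrdef
      have hCrlen : Cr.length < m := by
        have h1 : Cr = C0.filter (fun q => !(decide (q.1 = v))) := by
          rw [hCrdef, List.filter_cons_of_neg (by simp [hv])]
        have := List.length_filter_le (fun q => !(decide (q.1 = v))) C0
        rw [h1]
        simp only [List.length_cons] at hlen
        omega
      have hCrcl : Clique G Cr := clique_filter hcl _
      have hCrev : ∀ w : Fin n, (2 : ℤ) ∣ zcnt w Cr := by
        intro w
        by_cases hw : w = v
        · rw [hw, hzr]
          exact dvd_zero 2
        · rw [hzother w hw]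
          exact hev w
      obtain ⟨u', hu1, hu2, hu3⟩ := IH Cr.length hCrlen Cr rfl hCrcl hCrev
      obtain ⟨k, hk⟩ := hev v
      have hgv : ∀ q ∈ Cr, Commute (gen G v) (gen G q.1) := by
        intro q hq
        have hqC : q ∈ p :: C0 := List.mem_of_mem_filter hq
        have hqv : q.1 ≠ v := by
          have := List.of_mem_filter hq
          simpa using this
        rcases hcl p (List.mem_cons_self (a := p) (l := C0)) q hqC with h | h
        · exact absurd ((hv ▸ h).symm) hqv
        · exact gen_comm h
      have hcomm : Commute (gen G v ^ k) u' := (hu3 _ (fun q hq => (hgv q hq).zpow_left k))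
      refine ⟨gen G v ^ k * u', ?_, ?_, ?_⟩
      · rw [hsplit, hu1, hk]
        have h6 : gen G v ^ (2 * k) = gen G v ^ k * gen G v ^ k := by
          rw [two_mul, zpow_add]
        rw [h6]
        simp only [mul_assoc]
        congr 1
        rw [← mul_assoc, hcomm.eq, mul_assoc, hcomm.eq]
      · rw [RR_mul, hu2, RR_zpow _ (RR_gen v) k, hcomm.symm.eq]
      · intro x hx
        refine Commute.mul_right ?_ (hu3 x (fun q hq => hx q (List.mem_of_mem_filter hq)))
        exact (hx p (List.mem_cons_self (a := p) (l := C0))).zpow_right k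

/-- Odd clique words at `i` are palindromes with middle letter `i`. -/
lemma clique_odd (C : List (Letter n)) (hcl : Clique G C) (i : Fin n)
    (hodd : ¬ (2 : ℤ) ∣ zcnt i C) (hev : ∀ v : Fin n, v ≠ i → (2 : ℤ) ∣ zcnt v C) :
    ∃ u : RAAG G, wordProd G C = u * gen G i * RR G u := by
  obtain ⟨hsplit, hzr, hzother⟩ := clique_split C hcl i
  set Cr := C.filter (fun q => !(decide (q.1 = i))) with hCrdef
  have hCrcl : Clique G Cr := clique_filter hcl _
  have hCrev : ∀ w : Fin n, (2 : ℤ) ∣ zcnt w Cr := by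
    intro w
    by_cases hw : w = i
    · rw [hw, hzr]
      exact dvd_zero 2
    · rw [hzother w hw]; exact hev w hw
  obtain ⟨u', hu1, hu2, hu3⟩ := clique_even Cr.length Cr rfl hCrcl hCrev
  obtain ⟨p₀, hp₀C, hp₀⟩ := exists_vertex_of_zcnt_ne (v := i) (C := C)
    (fun h0 => hodd (h0 ▸ dvd_zero 2))
  have hgi : ∀ q ∈ Cr, Commute (gen G i) (gen G q.1) := by
    intro q hq
    have hqC : q ∈ C := List.mem_of_mem_filter hq
    have hqv : q.1 ≠ i := by
      have := List.of_mem_filter hq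
      simpa using this
    rcases hcl p₀ hp₀C q hqC with h | h
    · exact absurd ((hp₀ ▸ h).symm) hqv
    · exact gen_comm (hp₀ ▸ h)
  have hgiu : Commute (gen G i) u' := hu3 _ (fun q hq => hgi q hq)
  have hz : zcnt i C = 2 * (zcnt i C / 2) + 1 := by omega
  set k := zcnt i C / 2 with hkdef
  have hcommk : Commute (gen G i ^ k) u' := hu3 _ (fun q hq => (hgi q hq).zpow_left k)
  refine ⟨gen G i ^ k * u', ?_⟩
  rw [RR_mul, hu2, RR_zpow _ (RR_gen i) k]
  rw [hsplit, hu1, hz]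
  have h1 : gen G i ^ (2 * k + 1) = gen G i ^ k * gen G i * gen G i ^ k := by
    have h2 : (2 * k + 1 : ℤ) = k + 1 + k := by ring
    rw [h2, zpow_add, zpow_add, zpow_one]
  rw [h1]
  -- goal: gi^k * gi * gi^k * (u' * u') = gi^k * u' * gi * (u' * gi^k)
  calc gen G i ^ k * gen G i * gen G i ^ k * (u' * u')
      = gen G i ^ k * (gen G i * (gen G i ^ k * u') * u') := by
        simp only [mul_assoc]
    _ = gen G i ^ k * (gen G i * (u' * gen G i ^ k) * u') := by rw [hcommk.eq]
    _ = gen G i ^ k * ((gen G i * u') * (gen G i ^ k * u')) := by simp only [mul_assoc]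
    _ = gen G i ^ k * ((u' * gen G i) * (u' * gen G i ^ k)) := by
        rw [hgiu.eq, (hcommk.symm).eq]
    _ = gen G i ^ k * u' * gen G i * (u' * gen G i ^ k) := by simp only [mul_assoc]

/-- A reversal-invariant element whose mod-2 abelianisation is a basis vector is a
palindrome with prescribed middle letter. -/
lemma pure_of_R_fixed {w : RAAG G} (hw : RR G w = w) {i : Fin n}
    (hpar : mod2Vec G w = dvec i) :
    ∃ u : RAAG G, w = u * letter G (i, true) * RR G u := by
  obtain ⟨u₀, C, hcl, hdecomp⟩ := struct hw
  have hm : mod2Vec G (wordProd G C) = dvec i := by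
    rw [← mod2Vec_palElem u₀ (wordProd G C), ← hdecomp, hpar]
  have hco : ∀ v, ((zcnt v C : ℤ) : ZMod 2) = dvec i v := by
    intro v
    have := congrFun hm v
    rwa [mod2Vec, abVec_wordProd] at this
  have hodd : ¬ (2 : ℤ) ∣ zcnt i C := by
    intro hdvd
    have h1 := hco i
    rw [(ZMod.intCast_zmod_eq_zero_iff_dvd _ 2).2 (by exact_mod_cast hdvd)] at h1
    simp [dvec] at h1
  have hev : ∀ v, v ≠ i → (2 : ℤ) ∣ zcnt v C := by
    intro v hv
    have h1 := hco v
    rw [show dvec i v = 0 by simp [dvec, Ne.symm hv]] at h1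
    have := (ZMod.intCast_zmod_eq_zero_iff_dvd (zcnt v C) 2).1 h1
    exact_mod_cast this
  obtain ⟨u₁, hu₁⟩ := clique_odd C hcl i hodd hev
  refine ⟨u₀ * u₁, ?_⟩
  rw [show letter G (i, true) = gen G i by simp [letter]]
  rw [hdecomp, hu₁, RR_mul]
  simp only [mul_assoc]

/-- Two distinct vertices both odd in a reversal-invariant element must be adjacent. -/
lemma adj_of_R_fixed {w : RAAG G} (hw : RR G w = w) {a b : Fin n} (hab : a ≠ b)
    (ha : mod2Vec G w a = 1) (hb : mod2Vec G w b = 1) : G.Adj a b := by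
  obtain ⟨u₀, C, hcl, hdecomp⟩ := struct hw
  have hm : mod2Vec G (wordProd G C) = mod2Vec G w := by
    rw [hdecomp, mod2Vec_palElem]
  have hco : ∀ v, ((zcnt v C : ℤ) : ZMod 2) = mod2Vec G w v := by
    intro v
    have := congrFun hm v
    rwa [mod2Vec, abVec_wordProd] at this
  have hza : zcnt a C ≠ 0 := by
    intro h0
    have := hco a
    rw [h0, ha] at this
    simp at this
  have hzb : zcnt b C ≠ 0 := by
    intro h0
    have := hco b
    rw [h0, hb] at this
    simp at this
  obtain ⟨p, hpC, hpa⟩ := exists_vertex_of_zcnt_ne hza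
  obtain ⟨q, hqC, hqb⟩ := exists_vertex_of_zcnt_ne hzb
  rcases hcl p hpC q hqC with h | h
  · exact absurd (hpa ▸ hqb ▸ h) hab
  · exact hpa ▸ hqb ▸ h

end RaagPal
namespace RaagPal

variable {n : ℕ} {G : SimpleGraph (Fin n)}

/-! ### Element-level characterisation of palindromes -/

/-- An element-level palindrome: `u · m · R(u)` with `m` trivial or a letter. -/
def PalElem (G : SimpleGraph (Fin n)) (w : RAAG G) : Prop :=
  ∃ u : RAAG G, w = u * RR G u ∨ ∃ p : Letter n, w = u * letter G p * RR G u

/-- A pure palindrome at `i`: `u · i^{±1} · R(u)`. -/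
def PureElem (G : SimpleGraph (Fin n)) (i : Fin n) (w : RAAG G) : Prop :=
  ∃ (u : RAAG G) (b : Bool), w = u * letter G (i, b) * RR G u

lemma PureElem.palElem {i : Fin n} {w : RAAG G} (h : PureElem G i w) : PalElem G w := by
  obtain ⟨u, b, h⟩ := h
  exact ⟨u, Or.inr ⟨(i, b), h⟩⟩

lemma PalElem.RR_fixed {w : RAAG G} (h : PalElem G w) : RR G w = w := by
  obtain ⟨u, h | ⟨p, h⟩⟩ := h
  · rw [h, RR_mul, RR_RR]
  · rw [h, RR_mul, RR_mul, RR_RR, RR_letter, mul_assoc]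

lemma PalElem.inv {w : RAAG G} (h : PalElem G w) : PalElem G w⁻¹ := by
  obtain ⟨u, h | ⟨p, h⟩⟩ := h
  · refine ⟨(RR G u)⁻¹, Or.inl ?_⟩
    rw [h, mul_inv_rev, RR_inv, RR_RR]
  · refine ⟨(RR G u)⁻¹, Or.inr ⟨linv p, ?_⟩⟩
    rw [h, mul_inv_rev, mul_inv_rev, RR_inv, RR_RR, letter_linv, mul_assoc]

lemma list_palin_split : ∀ (l : ℕ) (L : List (Letter n)), L.length = l → L.reverse = L →
    (∃ M : List (Letter n), L = M ++ M.reverse) ∨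
      ∃ (M : List (Letter n)) (p : Letter n), L = M ++ p :: M.reverse := by
  intro l
  induction l using Nat.strong_induction_on with
  | _ l IH =>
    intro L hlen hrev
    cases L with
    | nil => exact Or.inl ⟨[], rfl⟩
    | cons p T =>
      rcases List.eq_nil_or_concat T with rfl | ⟨T', t, rfl⟩
      · exact Or.inr ⟨[], p, rfl⟩
      · simp only [List.concat_eq_append] at hlen hrev
        have h1 : t :: (T'.reverse ++ [p]) = p :: (T' ++ [t]) := by
          have := hrev
          rw [List.reverse_cons, List.reverse_append, List.reverse_singleton] at this
          simpa [List.append_assoc] using this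
        have h2 : t = p := (List.cons.injEq _ _ _ _ ▸ h1).1
        have h3 : T'.reverse = T' := by
          have h4 : T'.reverse ++ [p] = T' ++ [t] := (List.cons.injEq _ _ _ _ ▸ h1).2
          rw [h2] at h4
          exact List.append_cancel_right h4
        have hlt : T'.length < l := by
          simp only [List.length_cons, List.length_append, List.length_singleton] at hlen
          omega
        rcases IH T'.length hlt T' rfl h3 with ⟨M, hM⟩ | ⟨M, q, hM⟩
        · left
          refine ⟨p :: M, ?_⟩
          rw [h2, hM]
          simp [List.append_assoc, List.concat_eq_append]
        · right
          refine ⟨p :: M, q, ?_⟩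
          rw [h2, hM]
          simp [List.append_assoc, List.concat_eq_append]

lemma isPalindrome_iff (w : RAAG G) : IsPalindrome G w ↔ PalElem G w := by
  constructor
  · rintro ⟨L, hrev, hprod⟩
    rcases list_palin_split L.length L rfl hrev with ⟨M, hM⟩ | ⟨M, p, hM⟩
    · refine ⟨wordProd G M, Or.inl ?_⟩
      rw [← hprod, hM, wordProd_append, wordProd_reverse]
    · refine ⟨wordProd G M, Or.inr ⟨p, ?_⟩⟩
      rw [← hprod, hM, wordProd_append, wordProd_cons, wordProd_reverse, mul_assoc]
  · rintro ⟨u, h | ⟨p, h⟩⟩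
    · obtain ⟨Lu, hLu⟩ := exists_word u
      refine ⟨Lu ++ Lu.reverse, by simp, ?_⟩
      rw [wordProd_append, wordProd_reverse, hLu, h]
    · obtain ⟨Lu, hLu⟩ := exists_word u
      refine ⟨Lu ++ p :: Lu.reverse, by simp, ?_⟩
      rw [wordProd_append, wordProd_cons, wordProd_reverse, hLu, h, mul_assoc]

lemma isPalAut_iff (α : MulAut (RAAG G)) :
    IsPalAut G α ↔ ∀ i, PalElem G (α (gen G i)) :=
  forall_congr' (fun i => isPalindrome_iff (α (gen G i)))

lemma isPurePalAut_iff (α : MulAut (RAAG G)) :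
    IsPurePalAut G α ↔ ∀ i, PureElem G i (α (gen G i)) := by
  refine forall_congr' (fun i => ?_)
  constructor
  · rintro ⟨L, b, h⟩
    refine ⟨wordProd G L, b, ?_⟩
    rw [h, wordProd_append, wordProd_cons, wordProd_reverse, mul_assoc]
  · rintro ⟨u, b, h⟩
    obtain ⟨Lu, hLu⟩ := exists_word u
    refine ⟨Lu, b, ?_⟩
    rw [h, wordProd_append, wordProd_cons, wordProd_reverse, hLu, mul_assoc]

/-! ### Commutation with the reversal -/

/-- `α` commutes with the reversal anti-automorphism. -/
def CommR (G : SimpleGraph (Fin n)) (α : MulAut (RAAG G)) : Prop :=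
  ∀ w : RAAG G, α (RR G w) = RR G (α w)

private def conjRR (α : MulAut (RAAG G)) : RAAG G →* RAAG G where
  toFun w := RR G (α (RR G w))
  map_one' := by simp
  map_mul' x y := by
    rw [RR_mul x y, map_mul, RR_mul]

lemma commR_of_pal {α : MulAut (RAAG G)} (h : ∀ i, PalElem G (α (gen G i))) :
    CommR G α := by
  have hext : (conjRR α : RAAG G →* RAAG G) = α.toMonoidHom := by
    apply hom_ext
    intro i
    show RR G (α (RR G (gen G i))) = α (gen G i)
    rw [RR_gen]
    exact (h i).RR_fixed
  intro w
  have h1 := DFunLike.congr_fun hext (RR G w)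
  show α (RR G w) = RR G (α w)
  have h2 : RR G (α (RR G (RR G w))) = α (RR G w) := h1
  rw [RR_RR] at h2
  exact h2.symm

lemma CommR.inv {α : MulAut (RAAG G)} (h : CommR G α) : CommR G α⁻¹ := by
  intro w
  have h1 := h (α⁻¹ w)
  have h2 : α ((α⁻¹ : MulAut (RAAG G)) (RR G w)) = α (RR G (α⁻¹ w)) := by
    rw [h1]
    show α (α⁻¹ (RR G w)) = RR G (α (α⁻¹ w))
    rw [MulAut.apply_inv_self, MulAut.apply_inv_self]
  exact α.injective h2

lemma CommR.mul {α β : MulAut (RAAG G)} (hα : CommR G α) (hβ : CommR G β) :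
    CommR G (α * β) := by
  intro w
  show α (β (RR G w)) = RR G (α (β w))
  rw [hβ w, hα (β w)]

end RaagPal
namespace RaagPal

variable {n : ℕ} {G : SimpleGraph (Fin n)}

/-! ### The mod-2 linearisation of an automorphism -/

/-- The column of `α` at `i`. -/
noncomputable def colVec (α : MulAut (RAAG G)) (i : Fin n) : Fin n → ZMod 2 :=
  mod2Vec G (α (gen G i))

/-- `mod2Vec` as a homomorphism. -/
noncomputable def m2hom (G : SimpleGraph (Fin n)) :
    RAAG G →* Multiplicative (Fin n → ZMod 2) where
  toFun w := Multiplicative.ofAdd (mod2Vec G w)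
  map_one' := by simp
  map_mul' x y := by
    rw [mod2Vec_mul]
    rfl

/-- The linear map on mod-2 vectors induced by `α`. -/
noncomputable def Sadd (α : MulAut (RAAG G)) : (Fin n → ZMod 2) →+ (Fin n → ZMod 2) where
  toFun x := ∑ v : Fin n, x v • colVec α v
  map_zero' := by simp
  map_add' x y := by
    simp only [Pi.add_apply, add_smul]
    rw [Finset.sum_add_distrib]

lemma Sadd_dvec (α : MulAut (RAAG G)) (i : Fin n) :
    Sadd α (dvec i) = mod2Vec G (α (gen G i)) := by
  show (∑ v : Fin n, dvec i v • colVec α v) = colVec α i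
  have h : ∀ v : Fin n, dvec i v • colVec α v = if i = v then colVec α v else 0 := by
    intro v
    simp only [dvec]
    by_cases h : i = v <;> simp [h]
  rw [Finset.sum_congr rfl (fun v _ => h v), Finset.sum_ite_eq]
  simp

lemma sum_smul_dvec (x : Fin n → ZMod 2) : (∑ v : Fin n, x v • dvec v) = x := by
  funext u
  rw [Finset.sum_apply]
  have h : ∀ v : Fin n, (x v • dvec v) u = if v = u then x v else 0 := by
    intro v
    simp only [Pi.smul_apply, dvec, smul_eq_mul]
    by_cases h : v = u <;> simp [h]
  rw [Finset.sum_congr rfl (fun v _ => h v), Finset.sum_ite_eq']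
  simp

lemma mod2Vec_apply_eq (α : MulAut (RAAG G)) (w : RAAG G) :
    mod2Vec G (α w) = Sadd α (mod2Vec G w) := by
  have hext : (m2hom G).comp α.toMonoidHom =
      ((AddMonoidHom.toMultiplicative (Sadd α)).comp (m2hom G)) := by
    apply hom_ext
    intro i
    show Multiplicative.ofAdd (mod2Vec G (α (gen G i))) =
      (AddMonoidHom.toMultiplicative (Sadd α)) (Multiplicative.ofAdd (mod2Vec G (gen G i)))
    rw [mod2Vec_gen]
    show _ = Multiplicative.ofAdd (Sadd α (dvec i))
    rw [Sadd_dvec]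
  have h1 := DFunLike.congr_fun hext w
  exact congrArg Multiplicative.toAdd h1

/-- Extraction of the mod-2 permutation of a palindromic automorphism. -/
lemma exists_sigma (α : MulAut (RAAG G)) (hA : ∀ i, PalElem G (α (gen G i))) :
    ∃ σ : Equiv.Perm (Fin n), ∀ i, mod2Vec G (α (gen G i)) = dvec (σ i) := by
  classical
  have hshape : ∀ i, colVec α i = 0 ∨ ∃ j, colVec α i = dvec j := by
    intro i
    rcases hA i with ⟨u, h | ⟨p, h⟩⟩
    · left
      rw [colVec, h, show u * RR G u = u * 1 * RR G u by rw [mul_one], mod2Vec_palElem,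
        mod2Vec_one]
    · exact Or.inr ⟨p.1, by rw [colVec, h, mod2Vec_palElem, mod2Vec_letter]⟩
  have hexist : ∀ j, ∃ v, colVec α v = dvec j := by
    intro j
    by_contra hc
    push_neg at hc
    have h1 : mod2Vec G (α (α⁻¹ (gen G j))) = Sadd α (mod2Vec G (α⁻¹ (gen G j))) :=
      mod2Vec_apply_eq α _
    rw [MulAut.apply_inv_self, mod2Vec_gen] at h1
    have h2 := congrFun h1 j
    have h3 : (Sadd α (mod2Vec G (α⁻¹ (gen G j)))) j = 0 := by
      show (∑ v : Fin n, mod2Vec G (α⁻¹ (gen G j)) v • colVec α v) j = 0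
      rw [Finset.sum_apply]
      apply Finset.sum_eq_zero
      intro v _
      rcases hshape v with h | ⟨j', h⟩
      · simp [h]
      · have hj' : j' ≠ j := fun hj => hc v (hj ▸ h)
        simp only [Pi.smul_apply, h, dvec, smul_eq_mul]
        rw [if_neg hj', mul_zero]
    rw [h3] at h2
    simp only [dvec, if_pos rfl] at h2
    exact one_ne_zero h2
  choose g hg using hexist
  have hginj : Function.Injective g := fun a b hab =>
    dvec_inj (by rw [← hg a, ← hg b, hab])
  have hgbij := Finite.injective_iff_bijective.1 hginj
  refine ⟨(Equiv.ofBijective g hgbij).symm, fun i => ?_⟩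
  have h2 : g ((Equiv.ofBijective g hgbij).symm i) = i :=
    Equiv.apply_symm_apply (Equiv.ofBijective g hgbij) i
  show colVec α i = _
  calc colVec α i = colVec α (g ((Equiv.ofBijective g hgbij).symm i)) := by rw [h2]
    _ = dvec ((Equiv.ofBijective g hgbij).symm i) := hg _

/-! ### Diagram automorphisms -/

private lemma diag_rels (φ : G ≃g G) :
    ∀ r ∈ raagRels G, FreeGroup.lift (fun i => gen G (φ i)) r = 1 := by
  rintro r ⟨i, j, hij, rfl⟩
  simp only [map_mul, map_inv, FreeGroup.lift_apply_of]
  have h := relation_holds (G := G) (φ.map_rel_iff.2 hij)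
  calc gen G (φ i) * gen G (φ j) * (gen G (φ i))⁻¹ * (gen G (φ j))⁻¹ = 1 := h

/-- The homomorphism induced by a graph automorphism. -/
noncomputable def diagHom (φ : G ≃g G) : RAAG G →* RAAG G :=
  PresentedGroup.toGroup (diag_rels φ)

lemma diagHom_gen (φ : G ≃g G) (i : Fin n) : diagHom φ (gen G i) = gen G (φ i) :=
  PresentedGroup.toGroup.of _

/-- The diagram automorphism induced by a graph automorphism. -/
noncomputable def diagAut (φ : G ≃g G) : MulAut (RAAG G) where
  toFun := diagHom φ
  invFun := diagHom φ.symm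
  left_inv := by
    have hext : (diagHom φ.symm).comp (diagHom φ) = MonoidHom.id (RAAG G) := by
      apply hom_ext
      intro i
      simp [diagHom_gen]
    intro x
    exact DFunLike.congr_fun hext x
  right_inv := by
    have hext : (diagHom φ).comp (diagHom φ.symm) = MonoidHom.id (RAAG G) := by
      apply hom_ext
      intro i
      simp [diagHom_gen]
    intro x
    exact DFunLike.congr_fun hext x
  map_mul' := map_mul _

lemma diagAut_gen (φ : G ≃g G) (i : Fin n) : diagAut φ (gen G i) = gen G (φ i) :=
  diagHom_gen φ i

lemma isDiagramAut_diagAut (φ : G ≃g G) : IsDiagramAut G (diagAut φ) :=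
  ⟨φ, diagAut_gen φ⟩

/-- An adjacency-preserving permutation of a finite graph is a graph automorphism. -/
noncomputable def sigmaIso (σ : Equiv.Perm (Fin n))
    (h : ∀ i j, G.Adj i j → G.Adj (σ i) (σ j)) : G ≃g G := by
  have hpow : ∀ (k : ℕ) (i j : Fin n), G.Adj i j → G.Adj ((σ ^ k) i) ((σ ^ k) j) := by
    intro k
    induction k with
    | zero => intro i j hij; simpa using hij
    | succ k ih =>
        intro i j hij
        have h1 : (σ ^ (k + 1)) i = (σ ^ k) (σ i) := by
          rw [pow_succ]
          rfl
        have h2 : (σ ^ (k + 1)) j = (σ ^ k) (σ j) := by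
          rw [pow_succ]
          rfl
        rw [h1, h2]
        exact ih _ _ (h i j hij)
  have hpos : 0 < orderOf σ := orderOf_pos σ
  have hback : ∀ i j, G.Adj (σ i) (σ j) → G.Adj i j := by
    intro i j hij
    have h1 := hpow (orderOf σ - 1) _ _ hij
    have h2 : (σ ^ (orderOf σ - 1)) (σ i) = i := by
      have : (σ ^ (orderOf σ - 1)) (σ i) = (σ ^ (orderOf σ - 1) * σ) i := rfl
      rw [this, ← pow_succ, Nat.sub_add_cancel hpos, pow_orderOf_eq_one]
      rfl
    have h3 : (σ ^ (orderOf σ - 1)) (σ j) = j := by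
      have : (σ ^ (orderOf σ - 1)) (σ j) = (σ ^ (orderOf σ - 1) * σ) j := rfl
      rw [this, ← pow_succ, Nat.sub_add_cancel hpos, pow_orderOf_eq_one]
      rfl
    rwa [h2, h3] at h1
  exact ⟨σ, fun {i j} => ⟨hback i j, h i j⟩⟩

lemma sigmaIso_apply (σ : Equiv.Perm (Fin n)) (h) (i : Fin n) :
    (sigmaIso (G := G) σ h) i = σ i := rfl

end RaagPal
namespace RaagPal

variable {n : ℕ} {G : SimpleGraph (Fin n)}

/-! ### Closure properties -/

lemma PalElem.sandwich {m : RAAG G} (u : RAAG G) (h : PalElem G m) :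
    PalElem G (u * m * RR G u) := by
  obtain ⟨v, h | ⟨p, h⟩⟩ := h
  · refine ⟨u * v, Or.inl ?_⟩
    rw [h, RR_mul]
    simp only [mul_assoc]
  · refine ⟨u * v, Or.inr ⟨p, ?_⟩⟩
    rw [h, RR_mul]
    simp only [mul_assoc]

lemma PureElem.sandwich {i : Fin n} {m : RAAG G} (u : RAAG G) (h : PureElem G i m) :
    PureElem G i (u * m * RR G u) := by
  obtain ⟨v, b, h⟩ := h
  refine ⟨u * v, b, ?_⟩
  rw [h, RR_mul]
  simp only [mul_assoc]

lemma PureElem.inv {i : Fin n} {w : RAAG G} (h : PureElem G i w) : PureElem G i w⁻¹ := by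
  obtain ⟨u, b, h⟩ := h
  refine ⟨(RR G u)⁻¹, !b, ?_⟩
  rw [h, mul_inv_rev, mul_inv_rev, RR_inv, RR_RR]
  rw [show letter G (i, !b) = (letter G (i, b))⁻¹ from letter_linv (i, b)]
  simp only [mul_assoc]

lemma palElem_one_elem : PalElem G (1 : RAAG G) :=
  ⟨1, Or.inl (by simp)⟩

lemma pal_one : ∀ i, PalElem G ((1 : MulAut (RAAG G)) (gen G i)) := by
  intro i
  exact ⟨1, Or.inr ⟨(i, true), by simp [letter]⟩⟩

lemma PalElem.map {α : MulAut (RAAG G)} (hα : ∀ i, PalElem G (α (gen G i)))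
    {w : RAAG G} (h : PalElem G w) : PalElem G (α w) := by
  have hCR := commR_of_pal hα
  have hletter : ∀ p : Letter n, PalElem G (α (letter G p)) := by
    rintro ⟨v, b⟩
    cases b
    · rw [show letter G (v, false) = (gen G v)⁻¹ by simp [letter], map_inv]
      exact (hα v).inv
    · rw [show letter G (v, true) = gen G v by simp [letter]]
      exact hα v
  obtain ⟨u, h | ⟨p, h⟩⟩ := h
  · rw [h, map_mul, hCR u]
    exact ⟨α u, Or.inl rfl⟩
  · rw [h, map_mul, map_mul, show α (RR G u) = RR G (α u) from hCR u]
    exact PalElem.sandwich (α u) (hletter p)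

lemma pal_mul {α β : MulAut (RAAG G)} (hα : ∀ i, PalElem G (α (gen G i)))
    (hβ : ∀ i, PalElem G (β (gen G i))) : ∀ i, PalElem G ((α * β) (gen G i)) := by
  intro i
  rw [MulAut.mul_apply]
  exact PalElem.map hα (hβ i)

lemma pure_cols {β : MulAut (RAAG G)} (hβ : ∀ i, PureElem G i (β (gen G i))) :
    ∀ i, mod2Vec G (β (gen G i)) = dvec i := by
  intro i
  obtain ⟨u, b, h⟩ := hβ i
  rw [h, mod2Vec_palElem, mod2Vec_letter]

lemma pure_of_col {γ : MulAut (RAAG G)} (hγ : ∀ i, PalElem G (γ (gen G i)))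
    (hcol : ∀ i, mod2Vec G (γ (gen G i)) = dvec i) :
    ∀ i, PureElem G i (γ (gen G i)) := by
  intro i
  obtain ⟨u, h | ⟨p, h⟩⟩ := hγ i
  · exfalso
    have h1 : mod2Vec G (γ (gen G i)) = 0 := by
      rw [h, show u * RR G u = u * 1 * RR G u by rw [mul_one], mod2Vec_palElem, mod2Vec_one]
    have h2 := congrFun (h1.symm.trans (hcol i)) i
    simp only [Pi.zero_apply, dvec, if_pos rfl] at h2
    exact one_ne_zero h2.symm
  · have h1 : mod2Vec G (γ (gen G i)) = dvec p.1 := by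
      rw [h, mod2Vec_palElem, mod2Vec_letter]
    have h2 : p.1 = i := dvec_inj (h1.symm.trans (hcol i))
    refine ⟨u, p.2, ?_⟩
    rw [h, show (i, p.2) = p by rw [← h2]]

lemma Sadd_pure {β : MulAut (RAAG G)} (hβ : ∀ i, mod2Vec G (β (gen G i)) = dvec i)
    (x : Fin n → ZMod 2) : Sadd β x = x := by
  show (∑ v : Fin n, x v • colVec β v) = x
  have h : ∀ v : Fin n, colVec β v = dvec v := hβ
  calc (∑ v : Fin n, x v • colVec β v) = ∑ v : Fin n, x v • dvec v := by
        refine Finset.sum_congr rfl (fun v _ => by rw [h v])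
    _ = x := sum_smul_dvec x

lemma pure_inv {β : MulAut (RAAG G)} (hβ : ∀ i, PureElem G i (β (gen G i))) :
    ∀ i, PureElem G i ((β⁻¹ : MulAut (RAAG G)) (gen G i)) := by
  have hpal : ∀ i, PalElem G (β (gen G i)) := fun i => (hβ i).palElem
  have hCRinv : CommR G β⁻¹ := (commR_of_pal hpal).inv
  have hcols := pure_cols hβ
  intro i
  have hw : RR G (β⁻¹ (gen G i)) = β⁻¹ (gen G i) := by
    have := hCRinv (gen G i)
    rw [RR_gen] at this
    exact this.symm
  have hpar : mod2Vec G (β⁻¹ (gen G i)) = dvec i := by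
    have h1 : mod2Vec G (β (β⁻¹ (gen G i))) = Sadd β (mod2Vec G (β⁻¹ (gen G i))) :=
      mod2Vec_apply_eq β _
    rw [MulAut.apply_inv_self, mod2Vec_gen, Sadd_pure hcols] at h1
    exact h1.symm
  obtain ⟨u, hu⟩ := pure_of_R_fixed hw hpar
  exact ⟨u, true, hu⟩

lemma pure_mul {β γ : MulAut (RAAG G)} (hβ : ∀ i, PureElem G i (β (gen G i)))
    (hγ : ∀ i, PureElem G i (γ (gen G i))) :
    ∀ i, PureElem G i ((β * γ) (gen G i)) := by
  have hCR := commR_of_pal (fun i => (hβ i).palElem)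
  intro i
  rw [MulAut.mul_apply]
  obtain ⟨u, b, h⟩ := hγ i
  rw [h, map_mul, map_mul, show β (RR G u) = RR G (β u) from hCR u]
  refine PureElem.sandwich (β u) ?_
  cases b
  · rw [show letter G (i, false) = (gen G i)⁻¹ by simp [letter], map_inv]
    exact (hβ i).inv
  · rw [show letter G (i, true) = gen G i by simp [letter]]
    exact hβ i

/-! ### The mod-2 permutation of a palindromic automorphism is a graph automorphism -/

lemma sigma_adj {α : MulAut (RAAG G)} (hα : ∀ i, PalElem G (α (gen G i)))
    {σ : Equiv.Perm (Fin n)} (hσ : ∀ i, mod2Vec G (α (gen G i)) = dvec (σ i)) :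
    ∀ i j, G.Adj i j → G.Adj (σ i) (σ j) := by
  intro i j hij
  have hne : σ i ≠ σ j := fun h => G.ne_of_adj hij (σ.injective h)
  have hcomm : α (gen G i) * α (gen G j) = α (gen G j) * α (gen G i) := by
    rw [← map_mul, ← map_mul, (gen_comm hij).eq]
  have hRfix : RR G (α (gen G i) * α (gen G j)) = α (gen G i) * α (gen G j) := by
    rw [RR_mul, (hα j).RR_fixed, (hα i).RR_fixed, ← hcomm]
  have hm : mod2Vec G (α (gen G i) * α (gen G j)) = dvec (σ i) + dvec (σ j) := by
    rw [mod2Vec_mul, hσ i, hσ j]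
  have ha : mod2Vec G (α (gen G i) * α (gen G j)) (σ i) = 1 := by
    rw [hm]
    simp only [Pi.add_apply, dvec, if_pos rfl, if_neg (Ne.symm hne)]
    simp
  have hb : mod2Vec G (α (gen G i) * α (gen G j)) (σ j) = 1 := by
    rw [hm]
    simp only [Pi.add_apply, dvec, if_pos rfl, if_neg hne]
    simp
  exact adj_of_R_fixed hRfix hne ha hb

/-! ### Closure of diagram automorphisms -/

lemma diag_one : IsDiagramAut G (1 : MulAut (RAAG G)) :=
  ⟨RelIso.refl _, fun i => rfl⟩

lemma diag_mul {α β : MulAut (RAAG G)} (hα : IsDiagramAut G α) (hβ : IsDiagramAut G β) :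
    IsDiagramAut G (α * β) := by
  obtain ⟨φ, hφ⟩ := hα
  obtain ⟨ψ, hψ⟩ := hβ
  refine ⟨ψ.trans φ, fun i => ?_⟩
  rw [MulAut.mul_apply, hψ i, hφ (ψ i)]
  rfl

lemma diag_inv {α : MulAut (RAAG G)} (hα : IsDiagramAut G α) :
    IsDiagramAut G (α⁻¹ : MulAut (RAAG G)) := by
  obtain ⟨φ, hφ⟩ := hα
  refine ⟨φ.symm, fun i => ?_⟩
  have h1 : α (gen G (φ.symm i)) = gen G i := by
    rw [hφ (φ.symm i), RelIso.apply_symm_apply]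
  calc (α⁻¹ : MulAut (RAAG G)) (gen G i) = α⁻¹ (α (gen G (φ.symm i))) := by rw [h1]
    _ = gen G (φ.symm i) := by rw [MulAut.inv_def]; exact α.symm_apply_apply _

lemma diag_pal {α : MulAut (RAAG G)} (hα : IsDiagramAut G α) :
    ∀ i, PalElem G (α (gen G i)) := by
  obtain ⟨φ, hφ⟩ := hα
  intro i
  rw [hφ i]
  exact ⟨1, Or.inr ⟨(φ i, true), by simp [letter]⟩⟩

/-! ### Decomposition of a palindromic automorphism -/

lemma pal_decomp {α : MulAut (RAAG G)} (hα : ∀ i, PalElem G (α (gen G i))) :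
    ∃ β d : MulAut (RAAG G), (∀ i, PureElem G i (β (gen G i))) ∧ IsDiagramAut G d ∧
      α = β * d := by
  obtain ⟨σ, hσ⟩ := exists_sigma α hα
  set φ := sigmaIso (G := G) σ (sigma_adj hα hσ) with hφdef
  set d := diagAut φ with hddef
  have hd : IsDiagramAut G d := isDiagramAut_diagAut φ
  set β := α * d⁻¹ with hβdef
  have hdinv : IsDiagramAut G (d⁻¹ : MulAut (RAAG G)) := diag_inv hd
  have hβpal : ∀ i, PalElem G (β (gen G i)) := pal_mul hα (diag_pal hdinv)
  have hdinvgen : ∀ i, (d⁻¹ : MulAut (RAAG G)) (gen G i) = gen G (φ.symm i) := by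
    intro i
    have h1 : d (gen G (φ.symm i)) = gen G i := by
      rw [hddef, diagAut_gen, RelIso.apply_symm_apply]
    calc (d⁻¹ : MulAut (RAAG G)) (gen G i) = d⁻¹ (d (gen G (φ.symm i))) := by rw [h1]
      _ = gen G (φ.symm i) := by rw [MulAut.inv_def]; exact d.symm_apply_apply _
  have hβcols : ∀ i, mod2Vec G (β (gen G i)) = dvec i := by
    intro i
    rw [hβdef, MulAut.mul_apply, hdinvgen i, hσ (φ.symm i)]
    exact congrArg dvec (RelIso.apply_symm_apply φ i)
  refine ⟨β, d, pure_of_col hβpal hβcols, hd, ?_⟩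
  rw [hβdef]
  group

lemma pal_inv {α : MulAut (RAAG G)} (hα : ∀ i, PalElem G (α (gen G i))) :
    ∀ i, PalElem G ((α⁻¹ : MulAut (RAAG G)) (gen G i)) := by
  obtain ⟨β, d, hβ, hd, hαdecomp⟩ := pal_decomp hα
  have h1 : (α⁻¹ : MulAut (RAAG G)) = d⁻¹ * β⁻¹ := by
    rw [hαdecomp, mul_inv_rev]
  rw [h1]
  exact pal_mul (diag_pal (diag_inv hd)) (fun i => ((pure_inv hβ) i).palElem)

end RaagPal
namespace RaagPal

variable {n : ℕ} {G : SimpleGraph (Fin n)}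

lemma conj_pure {p q : MulAut (RAAG G)} (hp : ∀ i, PalElem G (p (gen G i)))
    (hq : ∀ i, PureElem G i (q (gen G i))) :
    ∀ i, PureElem G i ((p * q * p⁻¹) (gen G i)) := by
  have hpal : ∀ i, PalElem G ((p * q * p⁻¹) (gen G i)) :=
    pal_mul (pal_mul hp (fun i => (hq i).palElem)) (pal_inv hp)
  have hcols : ∀ i, mod2Vec G ((p * q * p⁻¹) (gen G i)) = dvec i := by
    intro i
    have h1 : (p * q * p⁻¹) (gen G i) = p (q ((p⁻¹ : MulAut (RAAG G)) (gen G i))) := by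
      rw [MulAut.mul_apply, MulAut.mul_apply]
    rw [h1, mod2Vec_apply_eq p, mod2Vec_apply_eq q, Sadd_pure (pure_cols hq),
      ← mod2Vec_apply_eq p, MulAut.apply_inv_self, mod2Vec_gen]
  exact pure_of_col hpal hcols

lemma pure_diag_eq_one {α : MulAut (RAAG G)} (hpure : IsPurePalAut G α)
    (hdiag : IsDiagramAut G α) : α = 1 := by
  obtain ⟨φ, hφ⟩ := hdiag
  have hp := (isPurePalAut_iff α).1 hpure
  have hfix : ∀ i, φ i = i := by
    intro i
    by_contra hne
    obtain ⟨u, b, hu⟩ := hp i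
    have h1 : abVec G (gen G (φ i)) = abVec G u + abVec G (letter G (i, b)) + abVec G u := by
      rw [← hφ i, hu, abVec_mul, abVec_mul, abVec_RR]
    rw [abVec_gen, abVec_letter] at h1
    have h2 := congrFun h1 (φ i)
    simp only [Pi.add_apply] at h2
    rw [if_neg (fun hh : i = φ i => hne hh.symm)] at h2
    simp only [if_true] at h2
    omega
  have hgen : ∀ i, α (gen G i) = gen G i := fun i => by rw [hφ i, hfix i]
  exact mulAut_ext hgen

/-- The subgroup of palindromic automorphisms. -/
def PAsub (G : SimpleGraph (Fin n)) : Subgroup (MulAut (RAAG G)) where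
  carrier := {α | IsPalAut G α}
  one_mem' := (isPalAut_iff 1).2 pal_one
  mul_mem' := fun {a b} ha hb =>
    (isPalAut_iff (a * b)).2 (pal_mul ((isPalAut_iff a).1 ha) ((isPalAut_iff b).1 hb))
  inv_mem' := fun {a} ha => (isPalAut_iff a⁻¹).2 (pal_inv ((isPalAut_iff a).1 ha))

/-- The subgroup of pure palindromic automorphisms. -/
def PPAsub (G : SimpleGraph (Fin n)) : Subgroup (MulAut (RAAG G)) where
  carrier := {α | IsPurePalAut G α}
  one_mem' := by
    refine (isPurePalAut_iff 1).2 (fun i => ⟨1, true, ?_⟩)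
    simp [letter]
  mul_mem' := fun {a b} ha hb =>
    (isPurePalAut_iff (a * b)).2
      (pure_mul ((isPurePalAut_iff a).1 ha) ((isPurePalAut_iff b).1 hb))
  inv_mem' := fun {a} ha => (isPurePalAut_iff a⁻¹).2 (pure_inv ((isPurePalAut_iff a).1 ha))

/-- The subgroup of diagram automorphisms. -/
def Dsub (G : SimpleGraph (Fin n)) : Subgroup (MulAut (RAAG G)) where
  carrier := {α | IsDiagramAut G α}
  one_mem' := diag_one
  mul_mem' := fun {a b} ha hb => diag_mul ha hb
  inv_mem' := fun {a} ha => diag_inv ha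

end RaagPal

open RaagPal in
/-- `ΠA_Γ` is a subgroup of `Aut(A_Γ)` and splits as the internal
semidirect product `ΠPA_Γ ⋊ D_Γ`: there are subgroups with carriers the palindromic
automorphisms, the pure palindromic automorphisms and the diagram automorphisms,
respectively, such that `ΠPA_Γ` is normal in `ΠA_Γ`, `ΠPA_Γ ⊓ D_Γ = ⊥` and
`ΠPA_Γ ⊔ D_Γ = ΠA_Γ`. -/
theorem palAut_splits (n : ℕ) (G : SimpleGraph (Fin n)) :
    ∃ PA PPA D : Subgroup (MulAut (RAAG G)),
      (PA : Set (MulAut (RAAG G))) = {α | IsPalAut G α} ∧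
      (PPA : Set (MulAut (RAAG G))) = {α | IsPurePalAut G α} ∧
      (D : Set (MulAut (RAAG G))) = {α | IsDiagramAut G α} ∧
      PPA ≤ PA ∧ D ≤ PA ∧
      (∀ p ∈ PA, ∀ q ∈ PPA, p * q * p⁻¹ ∈ PPA) ∧
      PPA ⊓ D = ⊥ ∧ PPA ⊔ D = PA := by
  have hPPAle : PPAsub G ≤ PAsub G := by
    intro α hα
    exact (isPalAut_iff α).2 (fun i => (((isPurePalAut_iff α).1 hα) i).palElem)
  have hDle : Dsub G ≤ PAsub G := by
    intro α hα
    exact (isPalAut_iff α).2 (diag_pal hα)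
  refine ⟨PAsub G, PPAsub G, Dsub G, rfl, rfl, rfl, hPPAle, hDle, ?_, ?_, ?_⟩
  · intro p hp q hq
    exact (isPurePalAut_iff (p * q * p⁻¹)).2
      (conj_pure ((isPalAut_iff p).1 hp) ((isPurePalAut_iff q).1 hq))
  · rw [eq_bot_iff]
    intro α hα
    rw [Subgroup.mem_inf] at hα
    rw [Subgroup.mem_bot]
    exact pure_diag_eq_one hα.1 hα.2
  · refine le_antisymm (sup_le hPPAle hDle) ?_
    intro α hα
    obtain ⟨β, d, hβ, hd, hdecomp⟩ := pal_decomp ((isPalAut_iff α).1 hα)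
    rw [hdecomp]
    exact Subgroup.mul_mem _
      (Subgroup.mem_sup_left ((isPurePalAut_iff β).2 hβ))
      (Subgroup.mem_sup_right hd)
end
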